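/- arXiv:1603.03109 — 5 statements merged into one kernel-verified Lean document; each statement's English description precedes it below -/
import Mathlib

section
/- Let G be a graph with n vertices and let S(G) be a maximum Sachs subgraph of G (a Sachs subgraph with the maximum number of vertices). Then η_per(G) = n − |V(S(G))|. -/
open Polynomial SimpleGraph

open scoped Classical in
/-- The permanental polynomial `per(xI - A(G))` of a graph. -/
noncomputable def permPoly {V : Type*} [Fintype V] (G : SimpleGraph V) : Polynomial ℤ :=
  Matrix.permanent
    ((Polynomial.X : ℤ[X]) • (1 : Matrix V V ℤ[X]) -
      Matrix.of fun i j => if G.Adj i j then (1 : ℤ[X]) else 0)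

/-- The permanental nullity: multiplicity of 0 as a root of the permanental polynomial. -/
noncomputable def perNullity {V : Type*} [Fintype V] (G : SimpleGraph V) : ℕ :=
  (permPoly G).rootMultiplicity 0

/-- Degree of a vertex in a subgraph. -/
noncomputable def subDeg {V : Type*} {G : SimpleGraph V} (H : G.Subgraph) (v : V) : ℕ :=
  (H.neighborSet v).ncard

/-- A Sachs subgraph: every component is a single edge or a cycle. -/
def IsSachs {V : Type*} {G : SimpleGraph V} (H : G.Subgraph) : Prop :=
  (∀ v ∈ H.verts, subDeg H v = 1 ∨ subDeg H v = 2) ∧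
    ∀ u v, H.Adj u v → subDeg H u = 1 → subDeg H v ≠ 2

/-- Number of cycle components of a Sachs subgraph. -/
noncomputable def cyclesCount {V : Type*} {G : SimpleGraph V} (H : G.Subgraph) : ℕ :=
  H.edgeSet.ncard + Nat.card H.coe.ConnectedComponent - H.verts.ncard

/-- Matching number. -/
noncomputable def matchingNumber {V : Type*} [Fintype V] (G : SimpleGraph V) : ℕ :=
  sSup {n | ∃ M : G.Subgraph, M.IsMatching ∧ M.edgeSet.ncard = n}

/-- A maximum matching. -/
def IsMaximumMatching {V : Type*} {G : SimpleGraph V} (M : G.Subgraph) : Prop :=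
  M.IsMatching ∧ ∀ N : G.Subgraph, N.IsMatching → N.edgeSet.ncard ≤ M.edgeSet.ncard

/-- `D(G)`: vertices missed by at least one maximum matching. -/
def DSet {V : Type*} (G : SimpleGraph V) : Set V :=
  {v | ∃ M : G.Subgraph, IsMaximumMatching M ∧ v ∉ M.verts}

/-- `B(G)`: vertices outside `D(G)` adjacent to `D(G)`. -/
def BSet {V : Type*} (G : SimpleGraph V) : Set V :=
  {v | v ∉ DSet G ∧ ∃ u ∈ DSet G, G.Adj v u}

/-- `C(G)`. -/
def CSet {V : Type*} (G : SimpleGraph V) : Set V :=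
  (DSet G ∪ BSet G)ᶜ

/-- Factor-critical graph. -/
def IsFactorCritical {W : Type*} (H : SimpleGraph W) : Prop :=
  ∀ v : W, ∃ M : (H.induce ({v}ᶜ : Set W)).Subgraph, M.IsPerfectMatching

section Aux
open Finset
open scoped Classical

variable {V : Type*} [Fintype V] {G : SimpleGraph V}

lemma subDeg_eq_toFinset_card (S : G.Subgraph) (v : V) :
    subDeg S v = (S.neighborSet v).toFinset.card := Set.ncard_eq_toFinset_card' _

lemma IsSachs.deg_adj_eq {S : G.Subgraph} (hS : IsSachs S) {u v : V} (h : S.Adj u v) :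
    subDeg S u = subDeg S v := by
  rcases hS.1 u (S.edge_vert h) with hu | hu <;>
  rcases hS.1 v (S.edge_vert h.symm) with hv | hv
  · omega
  · exact absurd hv (hS.2 u v h hu)
  · exact absurd hu (hS.2 v u h.symm hv)
  · omega

lemma sachs_class_card_le {S : G.Subgraph} (hS : IsSachs S) {d : ℕ} (hd : 0 < d)
    (s : Finset ↥S.verts) (hdeg : ∀ v ∈ s, subDeg S v.1 = d) :
    s.card ≤ (s.biUnion fun v => (S.neighborSet v.1).toFinset).card := by
  set t := s.biUnion fun v => (S.neighborSet v.1).toFinset with ht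
  have key : s.card * d ≤ t.card * d := by
    apply Finset.card_mul_le_card_mul (fun (a : ↥S.verts) (b : V) => S.Adj a.1 b)
    · intro a ha
      have hsub : (S.neighborSet a.1).toFinset ⊆
          t.bipartiteAbove (fun (a : ↥S.verts) (b : V) => S.Adj a.1 b) a := by
        intro b hb
        rw [Set.mem_toFinset] at hb
        simp only [Finset.mem_bipartiteAbove]
        exact ⟨Finset.mem_biUnion.2 ⟨a, ha, Set.mem_toFinset.2 hb⟩, hb⟩
      calc d = (S.neighborSet a.1).toFinset.card := by
              rw [← hdeg a ha]; exact Set.ncard_eq_toFinset_card' _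
        _ ≤ _ := Finset.card_le_card hsub
    · intro b hb
      obtain ⟨a, ha, hab⟩ := Finset.mem_biUnion.1 hb
      rw [Set.mem_toFinset] at hab
      have hdb : subDeg S b = d := by rw [← hS.deg_adj_eq hab]; exact hdeg a ha
      calc (s.bipartiteBelow (fun (a : ↥S.verts) (b : V) => S.Adj a.1 b) b).card
          ≤ (S.neighborSet b).toFinset.card := by
            apply Finset.card_le_card_of_injOn (fun a => a.1)
            · intro a haa
              simp only [Finset.mem_coe, Finset.mem_bipartiteBelow] at haa
              rw [Finset.mem_coe, Set.mem_toFinset]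
              exact haa.2.symm
            · exact fun x _ y _ h => Subtype.ext h
        _ = d := by rw [← hdb]; exact (Set.ncard_eq_toFinset_card' _).symm
  exact Nat.le_of_mul_le_mul_right key hd

lemma sachs_hall {S : G.Subgraph} (hS : IsSachs S) (s : Finset ↥S.verts) :
    s.card ≤ (s.biUnion fun v => (S.neighborSet v.1).toFinset).card := by
  set f := fun v : ↥S.verts => (S.neighborSet v.1).toFinset with hfdef
  set s1 := s.filter fun v => subDeg S v.1 = 1 with hs1
  set s2 := s.filter fun v => subDeg S v.1 = 2 with hs2
  have hdisj12 : Disjoint s1 s2 := by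
    rw [Finset.disjoint_left]
    intro v h1 h2
    have e1 := (Finset.mem_filter.1 h1).2
    have e2 := (Finset.mem_filter.1 h2).2
    omega
  have hcard : s.card ≤ s1.card + s2.card := by
    rw [← Finset.card_union_of_disjoint hdisj12]
    apply Finset.card_le_card
    intro v hv
    rcases hS.1 v.1 v.2 with h | h
    · exact Finset.mem_union_left _ (Finset.mem_filter.2 ⟨hv, h⟩)
    · exact Finset.mem_union_right _ (Finset.mem_filter.2 ⟨hv, h⟩)
  have h1 := sachs_class_card_le hS one_pos s1 (fun v hv => (Finset.mem_filter.1 hv).2)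
  have h2 := sachs_class_card_le hS two_pos s2 (fun v hv => (Finset.mem_filter.1 hv).2)
  have hdisj : Disjoint (s1.biUnion f) (s2.biUnion f) := by
    rw [Finset.disjoint_left]
    intro b hb1 hb2
    obtain ⟨a, ha, hab⟩ := Finset.mem_biUnion.1 hb1
    obtain ⟨a', ha', hab'⟩ := Finset.mem_biUnion.1 hb2
    rw [hfdef, Set.mem_toFinset] at hab hab'
    have e1 : subDeg S b = 1 := by rw [← hS.deg_adj_eq hab]; exact (Finset.mem_filter.1 ha).2
    have e2 : subDeg S b = 2 := by rw [← hS.deg_adj_eq hab']; exact (Finset.mem_filter.1 ha').2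
    omega
  have hsub : s1.biUnion f ∪ s2.biUnion f ⊆ s.biUnion f := by
    apply Finset.union_subset <;>
      exact Finset.biUnion_subset_biUnion_of_subset_left _ (Finset.filter_subset _ _)
  calc s.card ≤ s1.card + s2.card := hcard
    _ ≤ (s1.biUnion f).card + (s2.biUnion f).card := Nat.add_le_add h1 h2
    _ = (s1.biUnion f ∪ s2.biUnion f).card := (Finset.card_union_of_disjoint hdisj).symm
    _ ≤ _ := Finset.card_le_card hsub

lemma exists_sachs_perm {S : G.Subgraph} (hS : IsSachs S) :
    ∃ σ : Equiv.Perm V, (∀ i, σ i ≠ i → S.Adj i (σ i)) ∧ ∀ i, (σ i ≠ i ↔ i ∈ S.verts) := by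
  obtain ⟨f, hfinj, hf⟩ := (Finset.all_card_le_biUnion_card_iff_exists_injective
    (fun v : ↥S.verts => (S.neighborSet v.1).toFinset)).1 (fun s => sachs_hall hS s)
  have hfv : ∀ v : ↥S.verts, S.Adj v.1 (f v) := fun v => by
    have := hf v; rwa [Set.mem_toFinset] at this
  have hmem : ∀ v : ↥S.verts, f v ∈ S.verts := fun v => S.edge_vert (hfv v).symm
  set f' : ↥S.verts → ↥S.verts := fun v => ⟨f v, hmem v⟩ with hf'
  have hinj' : Function.Injective f' := fun a b h => hfinj (congrArg Subtype.val h)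
  have hbij := Finite.injective_iff_bijective.1 hinj'
  set e := Equiv.ofBijective f' hbij with he
  set σ := Equiv.Perm.extendDomain e (Equiv.refl ↥S.verts) with hσ
  have hin : ∀ i (h : i ∈ S.verts), σ i = f ⟨i, h⟩ := by
    intro i h
    rw [hσ, Equiv.Perm.extendDomain_apply_subtype e (Equiv.refl ↥S.verts) h]
    rfl
  have hout : ∀ i, i ∉ S.verts → σ i = i := fun i h =>
    Equiv.Perm.extendDomain_apply_not_subtype e (Equiv.refl ↥S.verts) h
  refine ⟨σ, ?_, ?_⟩
  · intro i hi
    by_cases h : i ∈ S.verts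
    · rw [hin i h]; exact hfv ⟨i, h⟩
    · exact absurd (hout i h) hi
  · intro i
    constructor
    · intro hi
      by_contra h
      exact hi (hout i h)
    · intro h
      rw [hin i h]
      exact fun hh => (G.ne_of_adj (S.adj_sub (hfv ⟨i, h⟩))) hh.symm

def permSubgraph (G : SimpleGraph V) (σ : Equiv.Perm V)
    (hv : ∀ i, σ i ≠ i → G.Adj i (σ i)) : G.Subgraph where
  verts := {i | σ i ≠ i}
  Adj u v := u ≠ v ∧ (σ u = v ∨ σ v = u)
  adj_sub := by
    rintro u v ⟨hne, h | h⟩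
    · have hu : σ u ≠ u := by rw [h]; exact Ne.symm hne
      have := hv u hu; rwa [h] at this
    · have hu : σ v ≠ v := by rw [h]; exact hne
      have := hv v hu; rw [h] at this; exact this.symm
  edge_vert := by
    rintro u v ⟨hne, h | h⟩
    · simp only [Set.mem_setOf_eq]; rw [h]; exact Ne.symm hne
    · simp only [Set.mem_setOf_eq]
      intro hu
      exact hne (σ.injective (h.trans hu.symm)).symm
  symm := by
    refine ⟨?_⟩
    rintro u v ⟨hne, h⟩
    exact ⟨hne.symm, h.symm⟩

lemma permSubgraph_nbr (G : SimpleGraph V) (σ : Equiv.Perm V)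
    (hv : ∀ i, σ i ≠ i → G.Adj i (σ i)) {v : V} (hv' : σ v ≠ v) :
    (permSubgraph G σ hv).neighborSet v = {σ v, σ.symm v} := by
  ext u
  simp only [SimpleGraph.Subgraph.mem_neighborSet, Set.mem_insert_iff, Set.mem_singleton_iff]
  show (v ≠ u ∧ (σ v = u ∨ σ u = v)) ↔ _
  constructor
  · rintro ⟨hne, h | h⟩
    · exact Or.inl h.symm
    · exact Or.inr (by rw [← h, Equiv.symm_apply_apply])
  · rintro (h | h)
    · subst h; exact ⟨Ne.symm hv', Or.inl rfl⟩
    · subst h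
      refine ⟨?_, Or.inr (σ.apply_symm_apply v)⟩
      intro hh
      exact hv' ((congrArg σ hh).trans (σ.apply_symm_apply v))

lemma permSubgraph_deg1 (G : SimpleGraph V) (σ : Equiv.Perm V)
    (hv : ∀ i, σ i ≠ i → G.Adj i (σ i)) {v : V} (hv' : σ v ≠ v) (h : σ.symm v = σ v) :
    subDeg (permSubgraph G σ hv) v = 1 := by
  rw [subDeg, permSubgraph_nbr G σ hv hv', ← h, Set.pair_eq_singleton, Set.ncard_singleton]

lemma permSubgraph_deg2 (G : SimpleGraph V) (σ : Equiv.Perm V)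
    (hv : ∀ i, σ i ≠ i → G.Adj i (σ i)) {v : V} (hv' : σ v ≠ v) (h : σ.symm v ≠ σ v) :
    subDeg (permSubgraph G σ hv) v = 2 := by
  rw [subDeg, permSubgraph_nbr G σ hv hv']
  exact Set.ncard_pair (Ne.symm h)

lemma permSubgraph_isSachs (G : SimpleGraph V) (σ : Equiv.Perm V)
    (hv : ∀ i, σ i ≠ i → G.Adj i (σ i)) : IsSachs (permSubgraph G σ hv) := by
  constructor
  · intro v hvv
    have hv' : σ v ≠ v := hvv
    by_cases h : σ.symm v = σ v
    · exact Or.inl (permSubgraph_deg1 G σ hv hv' h)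
    · exact Or.inr (permSubgraph_deg2 G σ hv hv' h)
  · intro u v hadj hdeg1
    have hu' : σ u ≠ u := (permSubgraph G σ hv).edge_vert hadj
    obtain ⟨hne, hor⟩ : u ≠ v ∧ (σ u = v ∨ σ v = u) := hadj
    have hsymm : σ.symm u = σ u := by
      by_contra h
      rw [permSubgraph_deg2 G σ hv hu' h] at hdeg1
      omega
    have hσσ : σ (σ u) = u := by
      conv_rhs => rw [← σ.apply_symm_apply u, hsymm]
    have hveq : v = σ u := by
      rcases hor with h | h
      · exact h.symm
      · rw [← hsymm, ← h, Equiv.symm_apply_apply]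
    have hv' : σ v ≠ v := by
      rw [hveq, hσσ]
      rw [hveq] at hne
      exact hne
    have : σ.symm v = σ v := by
      rw [hveq, Equiv.symm_apply_apply, hσσ]
    rw [permSubgraph_deg1 G σ hv hv' this]
    omega

lemma permSubgraph_verts (G : SimpleGraph V) (σ : Equiv.Perm V)
    (hv : ∀ i, σ i ≠ i → G.Adj i (σ i)) : (permSubgraph G σ hv).verts = {i | σ i ≠ i} := rfl

noncomputable def pmat (G : SimpleGraph V) : Matrix V V ℤ[X] :=
  (Polynomial.X : ℤ[X]) • (1 : Matrix V V ℤ[X]) -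
    Matrix.of fun i j => if G.Adj i j then (1 : ℤ[X]) else 0

lemma permEntry (G : SimpleGraph V) (i j : V) :
    pmat G i j = if i = j then (X : ℤ[X]) else if G.Adj i j then -1 else 0 := by
  by_cases h : i = j
  · subst h
    simp [pmat, Matrix.sub_apply, Matrix.smul_apply, Matrix.one_apply, Matrix.of_apply, G.irrefl]
  · by_cases hA : G.Adj i j <;>
      simp [pmat, Matrix.sub_apply, Matrix.smul_apply, Matrix.one_apply, Matrix.of_apply, h, hA]

lemma permTerm (G : SimpleGraph V) (σ : Equiv.Perm V) :
    (∏ i, pmat G (σ i) i)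
    = if (∀ i, σ i ≠ i → G.Adj i (σ i))
      then Polynomial.C ((-1:ℤ) ^ (univ.filter fun i => σ i ≠ i).card) *
           (X:ℤ[X]) ^ (Fintype.card V - (univ.filter fun i => σ i ≠ i).card)
      else 0 := by
  by_cases hval : ∀ i, σ i ≠ i → G.Adj i (σ i)
  · rw [if_pos hval, ← Finset.prod_filter_mul_prod_filter_not univ (fun i => σ i ≠ i)]
    have h1 : (∏ i ∈ univ.filter (fun i => σ i ≠ i), pmat G (σ i) i)
        = (-1 : ℤ[X]) ^ (univ.filter fun i => σ i ≠ i).card := by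
      rw [Finset.prod_congr rfl (g := fun _ => (-1 : ℤ[X])) (fun i hi => ?_), Finset.prod_const]
      have hi' : σ i ≠ i := (Finset.mem_filter.1 hi).2
      rw [permEntry, if_neg hi', if_pos ((hval i hi').symm)]
    have h2 : (∏ i ∈ univ.filter (fun i => ¬ σ i ≠ i), pmat G (σ i) i)
        = (X : ℤ[X]) ^ (Fintype.card V - (univ.filter fun i => σ i ≠ i).card) := by
      rw [Finset.prod_congr rfl (g := fun _ => (X : ℤ[X])) (fun i hi => ?_), Finset.prod_const]
      · congr 1
        have := Finset.card_filter_add_card_filter_not (s := univ)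
          (p := fun i => σ i ≠ i)
        have hcard : (univ : Finset V).card = Fintype.card V := Finset.card_univ
        omega
      · have hi' : σ i = i := not_not.1 (Finset.mem_filter.1 hi).2
        rw [permEntry, if_pos hi']
    rw [h1, h2, map_pow, map_neg, map_one]
  · rw [if_neg hval]
    push_neg at hval
    obtain ⟨i, hi, hni⟩ := hval
    apply Finset.prod_eq_zero (Finset.mem_univ i)
    have h1 : σ i ≠ i := hi
    have h2 : ¬ G.Adj (σ i) i := fun h => hni h.symm
    rw [permEntry, if_neg h1, if_neg h2]

lemma permPoly_coeff (G : SimpleGraph V) (m : ℕ) :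
    (permPoly G).coeff m =
      ∑ σ ∈ univ.filter (fun σ : Equiv.Perm V => ∀ i, σ i ≠ i → G.Adj i (σ i)),
        if m = Fintype.card V - (univ.filter fun i => σ i ≠ i).card
        then (-1:ℤ) ^ (univ.filter fun i => σ i ≠ i).card else 0 := by
  have hexp : permPoly G =
      ∑ σ ∈ univ.filter (fun σ : Equiv.Perm V => ∀ i, σ i ≠ i → G.Adj i (σ i)),
        Polynomial.C ((-1:ℤ) ^ (univ.filter fun i => σ i ≠ i).card) *
          (X:ℤ[X]) ^ (Fintype.card V - (univ.filter fun i => σ i ≠ i).card) := by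
    have h0 : permPoly G = ∑ σ : Equiv.Perm V, ∏ i, pmat G (σ i) i := rfl
    rw [h0, ← Finset.sum_filter_of_ne
      (p := fun σ : Equiv.Perm V => ∀ i, σ i ≠ i → G.Adj i (σ i))
      (fun σ _ hne => by
        by_contra hc
        exact hne (by rw [permTerm, if_neg hc]))]
    exact Finset.sum_congr rfl fun σ hσ => by
      rw [permTerm, if_pos (Finset.mem_filter.1 hσ).2]
  rw [hexp, Polynomial.finset_sum_coeff]
  refine Finset.sum_congr rfl fun σ _ => ?_
  rw [Polynomial.coeff_C_mul, Polynomial.coeff_X_pow]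
  split_ifs <;> simp

end Aux

theorem stmt3 {V : Type*} [Fintype V] (G : SimpleGraph V) (S : G.Subgraph)
    (hS : IsSachs S) (hmax : ∀ T : G.Subgraph, IsSachs T → T.verts.ncard ≤ S.verts.ncard) :
    perNullity G = Fintype.card V - S.verts.ncard := by
  classical
  obtain ⟨σ0, hσ0S, hσ0iff⟩ := exists_sachs_perm hS
  set n := Fintype.card V with hn
  set s := S.verts.ncard with hs
  have hσ0G : ∀ i, σ0 i ≠ i → G.Adj i (σ0 i) := fun i hi => S.adj_sub (hσ0S i hi)
  have hk : ∀ σ : Equiv.Perm V, (∀ i, σ i ≠ i → G.Adj i (σ i)) →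
      (Finset.univ.filter fun i => σ i ≠ i).card ≤ s := by
    intro σ hσ
    have h1 := hmax _ (permSubgraph_isSachs G σ hσ)
    rw [permSubgraph_verts] at h1
    have h2 : {i | σ i ≠ i} = ↑(Finset.univ.filter fun i => σ i ≠ i) := by
      ext i; simp
    rw [h2, Set.ncard_coe_finset] at h1
    exact h1
  have hk0 : (Finset.univ.filter fun i => σ0 i ≠ i).card = s := by
    have h2 : (Finset.univ.filter fun i => σ0 i ≠ i) = S.verts.toFinset := by
      ext i
      simp only [Finset.mem_filter, Finset.mem_univ, true_and, Set.mem_toFinset]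
      exact hσ0iff i
    rw [h2, hs, Set.ncard_eq_toFinset_card']
  have hsn : s ≤ n := by
    rw [hs, hn]
    have := Set.ncard_le_ncard (Set.subset_univ S.verts) Set.finite_univ
    rwa [Set.ncard_univ, Nat.card_eq_fintype_card] at this
  have hlow : ∀ m, m < n - s → (permPoly G).coeff m = 0 := by
    intro m hm
    rw [permPoly_coeff]
    apply Finset.sum_eq_zero
    intro σ hσ
    have hkσ := hk σ (Finset.mem_filter.1 hσ).2
    have hne : m ≠ n - (Finset.univ.filter fun i => σ i ≠ i).card := by omega
    rw [if_neg hne]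
  have hcoeff : (permPoly G).coeff (n - s) ≠ 0 := by
    rw [permPoly_coeff]
    set valids := Finset.univ.filter
      (fun σ : Equiv.Perm V => ∀ i, σ i ≠ i → G.Adj i (σ i)) with hvalids
    have hcongr : ∀ σ ∈ valids,
        (if n - s = n - (Finset.univ.filter fun i => σ i ≠ i).card
         then (-1:ℤ) ^ (Finset.univ.filter fun i => σ i ≠ i).card else 0)
        = if (Finset.univ.filter fun i => σ i ≠ i).card = s then (-1:ℤ)^s else 0 := by
      intro σ hσ
      have hkσ := hk σ (Finset.mem_filter.1 hσ).2
      by_cases h : (Finset.univ.filter fun i => σ i ≠ i).card = s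
      · rw [if_pos (by omega), if_pos h, h]
      · rw [if_neg (by omega), if_neg h]
    rw [Finset.sum_congr rfl hcongr, ← Finset.sum_filter, Finset.sum_const]
    have hmem : σ0 ∈ valids.filter
        (fun σ => (Finset.univ.filter fun i => σ i ≠ i).card = s) := by
      rw [Finset.mem_filter, hvalids, Finset.mem_filter]
      exact ⟨⟨Finset.mem_univ _, hσ0G⟩, hk0⟩
    have hpos : 0 < (valids.filter
        (fun σ => (Finset.univ.filter fun i => σ i ≠ i).card = s)).card :=
      Finset.card_pos.2 ⟨σ0, hmem⟩
    simp only [nsmul_eq_mul]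
    exact mul_ne_zero (by exact_mod_cast hpos.ne') (pow_ne_zero _ (by norm_num))
  have hne0 : permPoly G ≠ 0 := fun h => hcoeff (by rw [h]; simp)
  rw [perNullity, Polynomial.rootMultiplicity_eq_natTrailingDegree']
  exact le_antisymm (Polynomial.natTrailingDegree_le_of_ne_zero hcoeff)
    (Polynomial.le_natTrailingDegree hne0 hlow)
end

section
/- A graph G on n vertices satisfies η_per(G) = 0 if and only if G has a spanning Sachs subgraph (a Sachs subgraph covering all n vertices). -/
open Polynomial SimpleGraph

open scoped Classical in
lemma permPoly_eq {V : Type*} [Fintype V] (G : SimpleGraph V) :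
    permPoly G = ∑ σ : Equiv.Perm V, ∏ i,
      ((if σ i = i then (X : ℤ[X]) else 0) - (if G.Adj (σ i) i then 1 else 0)) := by
  classical
  unfold permPoly Matrix.permanent
  congr 1; ext σ; congr 1; ext i
  simp [Matrix.smul_apply, Matrix.one_apply]

open scoped Classical in
lemma permPoly_coeff_card {V : Type*} [Fintype V] (G : SimpleGraph V) :
    (permPoly G).coeff (Fintype.card V) = 1 := by
  classical
  rw [permPoly_eq, finset_sum_coeff]
  rw [Finset.sum_eq_single (1 : Equiv.Perm V)]
  · simp [coeff_X_pow]
  · intro σ _ hσ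
    obtain ⟨i0, hi0⟩ : ∃ i, σ i ≠ i := by
      by_contra h; push_neg at h; exact hσ (Equiv.ext h)
    apply coeff_eq_zero_of_natDegree_lt
    set f : V → ℤ[X] := fun i =>
      ((if σ i = i then (X : ℤ[X]) else 0) - (if G.Adj (σ i) i then 1 else 0)) with hf
    have hbound : ∀ i : V, (f i).natDegree ≤ 1 := by
      intro i
      refine (natDegree_sub_le _ _).trans ?_
      split_ifs <;> simp
    have h0 : (f i0).natDegree = 0 := by
      simp only [hf, if_neg hi0]
      split_ifs <;> simp
    calc (∏ i, f i).natDegree ≤ ∑ i, (f i).natDegree := natDegree_prod_le _ _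
      _ < Fintype.card V := by
          rw [← Finset.sum_erase_add _ _ (Finset.mem_univ i0), h0, add_zero]
          calc ∑ i ∈ Finset.univ.erase i0, (f i).natDegree
              ≤ ∑ _i ∈ Finset.univ.erase i0, 1 := Finset.sum_le_sum fun i _ => hbound i
            _ = (Finset.univ.erase i0).card := by simp
            _ < Fintype.card V := by
                rw [Finset.card_erase_of_mem (Finset.mem_univ i0), Finset.card_univ]
                have : 0 < Fintype.card V := Fintype.card_pos_iff.mpr ⟨i0⟩
                omega
  · simp

open scoped Classical in
lemma permPoly_eval_zero_ne {V : Type*} [Fintype V] (G : SimpleGraph V) :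
    (permPoly G).eval 0 ≠ 0 ↔ ∃ σ : Equiv.Perm V, ∀ i, G.Adj (σ i) i := by
  classical
  have heval : (permPoly G).eval 0 =
      (-1 : ℤ) ^ (Fintype.card V) * ∑ σ : Equiv.Perm V, (if ∀ i, G.Adj (σ i) i then (1:ℤ) else 0) := by
    rw [permPoly_eq]
    rw [eval_finset_sum, Finset.mul_sum]
    congr 1; ext σ
    rw [eval_prod]
    have : ∀ i : V, ((if σ i = i then (X : ℤ[X]) else 0) - (if G.Adj (σ i) i then 1 else 0)).eval 0
        = -(if G.Adj (σ i) i then (1:ℤ) else 0) := by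
      intro i
      by_cases h : σ i = i
      · have : ¬ G.Adj (σ i) i := by rw [h]; exact G.irrefl
        simp [h, this]
      · simp [h]
        split_ifs <;> simp
    simp only [this]
    have : ∀ i : V, -(if G.Adj (σ i) i then (1:ℤ) else 0) = (-1) * (if G.Adj (σ i) i then (1:ℤ) else 0) := fun i => by ring
    simp only [this]
    rw [Finset.prod_mul_distrib, Finset.prod_const, Finset.card_univ, Finset.prod_boole]
    congr 1
    simp
  rw [heval]
  rw [mul_ne_zero_iff]
  have hpow : ((-1 : ℤ) ^ Fintype.card V) ≠ 0 := by positivity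
  rw [Finset.sum_boole]
  simp only [hpow, true_and, Ne, Nat.cast_eq_zero, Finset.card_eq_zero, ← Finset.not_nonempty_iff_eq_empty,
    not_not, Finset.filter_nonempty_iff]
  simp

lemma perm_to_sachs {V : Type*} [Fintype V] {G : SimpleGraph V} (σ : Equiv.Perm V)
    (hσ : ∀ i, G.Adj (σ i) i) :
    ∃ H : G.Subgraph, IsSachs H ∧ H.verts = Set.univ := by
  have hadj : ∀ u v : V, (σ u = v ∨ σ v = u) → G.Adj u v := by
    rintro u v (h | h)
    · exact (h ▸ hσ u).symm
    · exact h ▸ hσ v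
  set H : G.Subgraph :=
    { verts := Set.univ
      Adj := fun u v => σ u = v ∨ σ v = u
      adj_sub := fun h => hadj _ _ h
      edge_vert := fun _ => Set.mem_univ _
      symm := ⟨fun u v (h : σ u = v ∨ σ v = u) => h.symm⟩ } with hH
  refine ⟨H, ?_, rfl⟩
  have hAdj : ∀ u v : V, H.Adj u v ↔ (σ u = v ∨ σ v = u) := fun u v => Iff.rfl
  have hnbr : ∀ v : V, H.neighborSet v = {σ v, σ⁻¹ v} := by
    intro v
    ext u
    rw [SimpleGraph.Subgraph.mem_neighborSet, hAdj]
    simp only [Set.mem_insert_iff, Set.mem_singleton_iff]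
    constructor
    · rintro (h | h)
      · exact Or.inl h.symm
      · exact Or.inr (by rw [← h]; simp)
    · rintro (h | h)
      · exact Or.inl h.symm
      · exact Or.inr (by rw [h]; simp)
  have hdeg : ∀ v : V, subDeg H v = 1 ∨ subDeg H v = 2 := by
    intro v
    rw [subDeg, hnbr v]
    by_cases h : σ v = σ⁻¹ v
    · left; rw [h]; simp
    · right; exact Set.ncard_pair h
  constructor
  · exact fun v _ => hdeg v
  · intro u v huv h1 h2
    have hσu : σ u = σ⁻¹ u := by
      by_contra hne
      rw [subDeg, hnbr u, Set.ncard_pair hne] at h1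
      omega
    have hv : v = σ u := by
      rcases (hAdj u v).mp huv with h | h
      · exact h.symm
      · rw [← h] at hσu ⊢
        rw [hσu]; simp
    have hfix : σ v = σ⁻¹ v := by
      subst hv
      have h2' : σ (σ u) = u := by
        conv_lhs => rw [hσu]
        simp
      rw [h2']
      simp
    rw [subDeg, hnbr v, hfix] at h2
    simp at h2

lemma sachs_to_perm {V : Type*} [Fintype V] {G : SimpleGraph V} (H : G.Subgraph)
    (hS : IsSachs H) (hV : H.verts = Set.univ) :
    ∃ σ : Equiv.Perm V, ∀ i, G.Adj (σ i) i := by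
  classical
  set N : V → Finset V := fun v => (H.neighborSet v).toFinset with hN
  have hmemN : ∀ u v : V, u ∈ N v ↔ H.Adj v u := by
    intro u v; simp [hN, SimpleGraph.Subgraph.mem_neighborSet]
  have hcardN : ∀ v, (N v).card = subDeg H v := fun v => by
    rw [subDeg, Set.ncard_eq_toFinset_card']
  have hdeg : ∀ v, subDeg H v = 1 ∨ subDeg H v = 2 := fun v =>
    hS.1 v (hV ▸ Set.mem_univ v)
  have hone : ∀ u v, H.Adj u v → subDeg H u = 1 → subDeg H v = 1 := by
    intro u v h h1
    rcases hdeg v with h' | h'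
    · exact h'
    · exact absurd h' (hS.2 u v h h1)
  have htwo : ∀ u v, H.Adj u v → subDeg H u ≠ 1 → subDeg H v ≠ 1 := by
    intro u v h h2 hc
    exact h2 (hone v u h.symm hc)
  have hall : ∀ S : Finset V, S.card ≤ (S.biUnion N).card := by
    intro S
    set p : V → Prop := fun v => subDeg H v = 1 with hp
    set S1 := S.filter (fun v => p v) with hS1
    set S2 := S.filter (fun v => ¬ p v) with hS2
    set T1 := S1.biUnion N with hT1'
    set T2 := S2.biUnion N with hT2'
    have hT1 : ∀ u ∈ T1, subDeg H u = 1 := by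
      intro u hu
      rw [hT1', Finset.mem_biUnion] at hu
      obtain ⟨v, hv, hu⟩ := hu
      exact hone v u ((hmemN u v).mp hu) ((Finset.mem_filter.mp hv).2)
    have hT2 : ∀ u ∈ T2, subDeg H u = 2 := by
      intro u hu
      rw [hT2', Finset.mem_biUnion] at hu
      obtain ⟨v, hv, hu⟩ := hu
      have := htwo v u ((hmemN u v).mp hu) ((Finset.mem_filter.mp hv).2)
      rcases hdeg u with h' | h'
      · exact absurd h' this
      · exact h'
    have hdisj : Disjoint T1 T2 := Finset.disjoint_left.mpr fun u h1 h2 => by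
      have := hT1 u h1; have := hT2 u h2; omega
    have hsplit : S.biUnion N = T1 ∪ T2 := by
      rw [hT1', hT2']
      ext u
      simp only [Finset.mem_union, Finset.mem_biUnion, hS1, hS2, Finset.mem_filter]
      constructor
      · rintro ⟨v, hv, hu⟩
        by_cases h : p v
        · exact Or.inl ⟨v, ⟨hv, h⟩, hu⟩
        · exact Or.inr ⟨v, ⟨hv, h⟩, hu⟩
      · rintro (⟨v, ⟨hv, _⟩, hu⟩ | ⟨v, ⟨hv, _⟩, hu⟩) <;> exact ⟨v, hv, hu⟩
    -- |S1| ≤ |T1|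
    have hn : ∀ v, p v → ∃ a, N v = {a} := by
      intro v hv
      rw [Finset.card_eq_one.symm, hcardN]
      exact hv
    set n : V → V := fun v => if h : p v then (hn v h).choose else v with hnn
    have hnmem : ∀ v, p v → N v = {n v} := by
      intro v hv
      rw [hnn]; simp only [dif_pos hv]
      exact (hn v hv).choose_spec
    have hcard1 : S1.card ≤ T1.card := by
      apply Finset.card_le_card_of_injOn n
      · intro v hv
        rw [hT1', Finset.mem_coe, Finset.mem_biUnion]
        exact ⟨v, hv, by rw [hnmem v (Finset.mem_filter.mp hv).2]; simp⟩
      · intro v hv w hw hvw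
        have hpv := (Finset.mem_filter.mp hv).2
        have hpw := (Finset.mem_filter.mp hw).2
        -- n v = n w =: u; u has degree 1; v and w are both neighbors of u
        have hvadj : H.Adj v (n v) := (hmemN _ _).mp (by rw [hnmem v hpv]; simp)
        have hwadj : H.Adj w (n w) := (hmemN _ _).mp (by rw [hnmem w hpw]; simp)
        have hu1 : p (n v) := hone v (n v) hvadj hpv
        have h1 : v ∈ N (n v) := (hmemN _ _).mpr hvadj.symm
        have h2 : w ∈ N (n v) := (hmemN _ _).mpr (hvw ▸ hwadj.symm)
        rw [hnmem _ hu1, Finset.mem_singleton] at h1 h2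
        rw [h1, h2]
    -- |S2| ≤ |T2| by double counting
    have hcard2 : S2.card ≤ T2.card := by
      have hNfil : ∀ v ∈ S2, N v = T2.filter (fun u => H.Adj v u) := by
        intro v hv
        ext u
        rw [Finset.mem_filter, hmemN]
        constructor
        · intro h
          exact ⟨by rw [hT2', Finset.mem_biUnion]; exact ⟨v, hv, (hmemN u v).mpr h⟩, h⟩
        · exact fun h => h.2
      have hdeg2 : ∀ v ∈ S2, (N v).card = 2 := by
        intro v hv
        rw [hcardN]
        rcases hdeg v with h' | h'
        · exact absurd h' (Finset.mem_filter.mp hv).2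
        · exact h'
      have hleft : ∑ v ∈ S2, (N v).card = 2 * S2.card := by
        rw [Finset.sum_congr rfl hdeg2, Finset.sum_const, smul_eq_mul, mul_comm]
      have hfilcard : ∀ v ∈ S2, (N v).card = (T2.filter (fun u => H.Adj v u)).card :=
        fun v hv => by rw [hNfil v hv]
      have hswap : ∑ v ∈ S2, (N v).card = ∑ u ∈ T2, (S2.filter (fun v => H.Adj v u)).card := by
        rw [Finset.sum_congr rfl hfilcard]
        simp only [Finset.card_filter]
        exact Finset.sum_comm
      have hub : ∀ u ∈ T2, (S2.filter (fun v => H.Adj v u)).card ≤ 2 := by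
        intro u hu
        have hsub : S2.filter (fun v => H.Adj v u) ⊆ N u := by
          intro v hv
          exact (hmemN v u).mpr ((Finset.mem_filter.mp hv).2).symm
        calc (S2.filter (fun v => H.Adj v u)).card ≤ (N u).card := Finset.card_le_card hsub
          _ = 2 := by rw [hcardN]; exact hT2 u hu
      have hsum : ∑ u ∈ T2, (S2.filter (fun v => H.Adj v u)).card ≤ 2 * T2.card := by
        calc ∑ u ∈ T2, (S2.filter (fun v => H.Adj v u)).card ≤ ∑ _u ∈ T2, 2 :=
              Finset.sum_le_sum hub
          _ = 2 * T2.card := by rw [Finset.sum_const, smul_eq_mul, mul_comm]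
      omega
    calc S.card = S1.card + S2.card := by
          rw [hS1, hS2, Finset.card_filter_add_card_filter_not]
      _ ≤ T1.card + T2.card := Nat.add_le_add hcard1 hcard2
      _ = (T1 ∪ T2).card := (Finset.card_union_of_disjoint hdisj).symm
      _ = (S.biUnion N).card := by rw [hsplit]
  obtain ⟨f, hfinj, hfmem⟩ := (Finset.all_card_le_biUnion_card_iff_exists_injective N).mp hall
  have hfbij : Function.Bijective f := Finite.injective_iff_bijective.mp hfinj
  refine ⟨Equiv.ofBijective f hfbij, fun i => ?_⟩
  have : H.Adj i (f i) := (hmemN _ _).mp (hfmem i)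
  exact (H.adj_sub this).symm

theorem stmt4 {V : Type*} [Fintype V] (G : SimpleGraph V) :
    perNullity G = 0 ↔ ∃ H : G.Subgraph, IsSachs H ∧ H.verts = Set.univ := by
  classical
  have hne : permPoly G ≠ 0 := fun h => by
    have h1 := permPoly_coeff_card G
    rw [h] at h1
    simp at h1
  rw [perNullity]
  constructor
  · intro h0
    have hroot : ¬ (permPoly G).IsRoot 0 := fun hr =>
      hne (Polynomial.rootMultiplicity_eq_zero_iff.mp h0 hr)
    rw [Polynomial.IsRoot] at hroot
    obtain ⟨σ, hσ⟩ := (permPoly_eval_zero_ne G).mp hroot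
    exact perm_to_sachs σ hσ
  · rintro ⟨H, hS, hV⟩
    obtain ⟨σ, hσ⟩ := sachs_to_perm H hS hV
    exact Polynomial.rootMultiplicity_eq_zero ((permPoly_eval_zero_ne G).mpr ⟨σ, hσ⟩)
end

section
/- If M and N are perfect matchings of G − v and G − u respectively, where uv is an edge of G, then the symmetric difference M △ N contains exactly one path, this path has even length, joins u and v, and does not contain the edge uv. -/
open Polynomial SimpleGraph

open SimpleGraph

section auxgen

variable {V : Type*} {K : SimpleGraph V}

lemma aux_firstEdge {s t : V} (q : K.Walk s t) (h : s ≠ t) :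
    ∃ w, K.Adj s w ∧ s(s, w) ∈ q.edges := by
  cases q with
  | nil => exact absurd rfl h
  | cons h' q' => exact ⟨_, h', by simp⟩

lemma aux_lastEdge {s t : V} (q : K.Walk s t) (h : s ≠ t) :
    ∃ w, K.Adj t w ∧ s(t, w) ∈ q.edges := by
  obtain ⟨w, hw, hmem⟩ := aux_firstEdge q.reverse (Ne.symm h)
  exact ⟨w, hw, by rwa [Walk.edges_reverse, List.mem_reverse] at hmem⟩

lemma aux_startUnique {s t : V} (q : K.Walk s t) (hq : q.IsPath)
    {e₁ e₂ : Sym2 V} (h1 : e₁ ∈ q.edges) (h2 : e₂ ∈ q.edges)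
    (hs1 : s ∈ e₁) (hs2 : s ∈ e₂) : e₁ = e₂ := by
  cases q with
  | nil => simp at h1
  | cons h q' =>
    have hns : s ∉ q'.support := ((Walk.cons_isPath_iff h q').mp hq).2
    have key : ∀ e ∈ q'.edges, s ∉ e := by
      intro e he hse
      induction e using Sym2.ind with
      | _ a b =>
        rcases Sym2.mem_iff.mp hse with rfl | rfl
        · exact hns (q'.fst_mem_support_of_mem_edges he)
        · exact hns (q'.snd_mem_support_of_mem_edges he)
    rw [Walk.edges_cons, List.mem_cons] at h1 h2
    rcases h1 with rfl | h1
    · rcases h2 with rfl | h2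
      · rfl
      · exact absurd hs2 (key _ h2)
    · exact absurd hs1 (key _ h1)

lemma aux_endUnique {s t : V} (q : K.Walk s t) (hq : q.IsPath)
    {e₁ e₂ : Sym2 V} (h1 : e₁ ∈ q.edges) (h2 : e₂ ∈ q.edges)
    (ht1 : t ∈ e₁) (ht2 : t ∈ e₂) : e₁ = e₂ :=
  aux_startUnique q.reverse hq.reverse
    (by rwa [Walk.edges_reverse, List.mem_reverse])
    (by rwa [Walk.edges_reverse, List.mem_reverse]) ht1 ht2

lemma aux_ext (h2 : ∀ z a b c, K.Adj z a → K.Adj z b → K.Adj z c → a = b ∨ a = c ∨ b = c)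
    {s t z : V} (q : K.Walk s t) :
    q.IsPath → K.Adj t z → s(t, z) ∉ q.edges → z ∈ q.support →
      z = s ∧ ∃ a, K.Adj s a ∧ a ≠ t ∧ s(s, a) ∈ q.edges := by
  induction q with
  | nil =>
    intro _ hadj _ hz
    rw [Walk.support_nil, List.mem_singleton] at hz
    subst hz
    exact absurd hadj (K.irrefl)
  | cons h q' ih =>
    rename_i s s₁ t'
    intro hq hadj hnew hz
    have hq' : q'.IsPath := hq.of_cons
    have hns : s ∉ q'.support := ((Walk.cons_isPath_iff h q').mp hq).2
    by_cases hzs : z = s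
    · subst hzs
      refine ⟨rfl, s₁, h, ?_, by simp⟩
      intro hst
      subst hst
      obtain rfl := (Walk.isPath_iff_eq_nil (p := q')).mp hq'
      exact hnew (by simp [Sym2.eq_swap])
    · have hz' : z ∈ q'.support := by
        rcases (by simpa [Walk.support_cons] using hz : z = s ∨ z ∈ q'.support) with h' | h'
        · exact absurd h' hzs
        · exact h'
      have hnew' : s(t', z) ∉ q'.edges := fun hh => hnew (by rw [Walk.edges_cons]; exact List.mem_cons_of_mem _ hh)
      obtain ⟨rfl, a, ha, hat, hae⟩ := ih hq' hadj hnew' hz'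
      rcases h2 z a s t' ha h.symm hadj.symm with h1 | h2' | h3
      · subst h1
        exact absurd (q'.snd_mem_support_of_mem_edges hae) hns
      · exact absurd h2' hat
      · exact absurd (h3 ▸ q'.end_mem_support) hns

lemma aux_inv (P : V → Prop) (hPadj : ∀ a b, K.Adj a b → P a → P b) :
    ∀ {s t : V} (q : K.Walk s t), P s → ∀ x ∈ q.support, P x := by
  intro s t q
  induction q with
  | nil =>
    intro h x hx
    rw [Walk.support_nil, List.mem_singleton] at hx
    exact hx ▸ h
  | cons hadj q' ih =>
    intro h x hx
    rw [Walk.support_cons, List.mem_cons] at hx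
    rcases hx with rfl | hx
    · exact h
    · exact ih (hPadj _ _ hadj h) x hx

lemma aux_max {V : Type*} [Fintype V] (K : SimpleGraph V) (s : V) :
    ∃ (t : V) (q : K.Walk s t), q.IsPath ∧
      ∀ (t' : V) (q' : K.Walk s t'), q'.IsPath → q'.length ≤ q.length := by
  classical
  let S : Set ℕ := {n | ∃ (t : V) (q : K.Walk s t), q.IsPath ∧ q.length = n}
  have h0 : (0 : ℕ) ∈ S := ⟨s, Walk.nil, Walk.IsPath.nil, rfl⟩
  have hb : BddAbove S := by
    refine ⟨Fintype.card V, ?_⟩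
    rintro n ⟨t, q, hq, hl⟩
    exact hl ▸ hq.length_lt.le
  obtain ⟨t, q, hq, hl⟩ := Nat.sSup_mem ⟨0, h0⟩ hb
  exact ⟨t, q, hq, fun t' q' hq' => hl ▸ le_csSup hb ⟨t', q', hq', rfl⟩⟩

lemma aux_trap {V : Type*} [Fintype V] {K : SimpleGraph V} (P : V → Prop)
    (h2 : ∀ z a b c, K.Adj z a → K.Adj z b → K.Adj z c → a = b ∨ a = c ∨ b = c)
    {s goal : V} (hPs : P s)
    (hPadj : ∀ a b, K.Adj a b → P a → P b)
    (hKs : ∀ a b, K.Adj s a → K.Adj s b → a = b)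
    (hKsx : ∃ a, K.Adj s a)
    (hext : ∀ t w, K.Adj t w → P t → t ≠ goal → t ≠ s → ∃ z, K.Adj t z ∧ z ≠ w) :
    K.Reachable s goal := by
  obtain ⟨t, q, hq, hmax⟩ := aux_max K s
  by_cases hts : t = goal
  · exact ⟨hts ▸ q⟩
  exfalso
  by_cases hts2 : t = s
  · subst hts2
    obtain rfl := (Walk.isPath_iff_eq_nil (p := q)).mp hq
    obtain ⟨a, ha⟩ := hKsx
    have hpath : (Walk.cons ha Walk.nil).IsPath := by
      rw [Walk.cons_isPath_iff]
      exact ⟨Walk.IsPath.nil, by simp [ha.ne]⟩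
    have := hmax _ _ hpath
    simp at this
  · obtain ⟨w, hw, hwe⟩ := aux_lastEdge q (fun hh => hts2 hh.symm)
    have hPt := aux_inv P hPadj q hPs t q.end_mem_support
    obtain ⟨z, hz, hzw⟩ := hext t w hw hPt hts hts2
    have hnew : s(t, z) ∉ q.edges := by
      intro hmem
      exact hzw (Sym2.congr_right.mp
        (aux_endUnique q hq hmem hwe (Sym2.mem_mk_left t z) (Sym2.mem_mk_left t w)))
    have hzsup : z ∉ q.support := by
      intro hmem
      obtain ⟨rfl, a, ha, hat, _⟩ := aux_ext h2 q hq hz hnew hmem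
      exact hat (hKs a t ha hz.symm)
    have hcon : (q.concat hz).IsPath := by
      rw [← Walk.isPath_reverse_iff, Walk.reverse_concat]
      rw [Walk.cons_isPath_iff]
      exact ⟨hq.reverse, by simpa [Walk.support_reverse] using hzsup⟩
    have := hmax _ _ hcon
    rw [Walk.length_concat] at this
    omega

end auxgen

section auxspec

variable {V : Type*} {G : SimpleGraph V} {u v : V} (M N : G.Subgraph)

lemma Hadj_iff {a b : V} :
    (SimpleGraph.fromEdgeSet (symmDiff M.edgeSet N.edgeSet)).Adj a b ↔
      (M.Adj a b ∧ ¬ N.Adj a b) ∨ (N.Adj a b ∧ ¬ M.Adj a b) := by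
  rw [SimpleGraph.fromEdgeSet_adj, Set.mem_symmDiff]
  simp only [Subgraph.mem_edgeSet]
  constructor
  · rintro ⟨h, -⟩; exact h
  · rintro h
    refine ⟨h, ?_⟩
    rcases h with ⟨h, -⟩ | ⟨h, -⟩
    · exact (M.adj_sub h).ne
    · exact (N.adj_sub h).ne

variable {M N}

lemma Hadj_of_left {a b : V} (ha : a ∉ N.verts) :
    (SimpleGraph.fromEdgeSet (symmDiff M.edgeSet N.edgeSet)).Adj a b ↔ M.Adj a b := by
  rw [Hadj_iff]
  constructor
  · rintro (⟨h, -⟩ | ⟨h, -⟩)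
    · exact h
    · exact absurd h.fst_mem ha
  · intro h
    exact Or.inl ⟨h, fun hc => ha hc.fst_mem⟩

lemma Hadj_of_right {a b : V} (ha : a ∉ M.verts) :
    (SimpleGraph.fromEdgeSet (symmDiff M.edgeSet N.edgeSet)).Adj a b ↔ N.Adj a b := by
  rw [Hadj_iff]
  constructor
  · rintro (⟨h, -⟩ | ⟨h, -⟩)
    · exact absurd h.fst_mem ha
    · exact h
  · intro h
    exact Or.inr ⟨h, fun hc => ha hc.fst_mem⟩

variable (hM : M.IsMatching) (hMv : M.verts = ({v}ᶜ : Set V))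
  (hN : N.IsMatching) (hNu : N.verts = ({u}ᶜ : Set V))

include hNu in
lemma hu_not_mem : u ∉ N.verts := by rw [hNu]; simp

include hMv in
lemma hv_not_mem : v ∉ M.verts := by rw [hMv]; simp

include hM hNu in
lemma hs1u : ∀ a b, (SimpleGraph.fromEdgeSet (symmDiff M.edgeSet N.edgeSet)).Adj u a →
    (SimpleGraph.fromEdgeSet (symmDiff M.edgeSet N.edgeSet)).Adj u b → a = b := by
  intro a b ha hb
  rw [Hadj_of_left (hu_not_mem hNu)] at ha hb
  exact (hM ha.fst_mem).unique ha hb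

include hN hMv in
lemma hs1v : ∀ a b, (SimpleGraph.fromEdgeSet (symmDiff M.edgeSet N.edgeSet)).Adj v a →
    (SimpleGraph.fromEdgeSet (symmDiff M.edgeSet N.edgeSet)).Adj v b → a = b := by
  intro a b ha hb
  rw [Hadj_of_right (hv_not_mem hMv)] at ha hb
  exact (hN ha.fst_mem).unique ha hb

include hM hMv hNu in
lemma hexu (huv : u ≠ v) : ∃ a, (SimpleGraph.fromEdgeSet (symmDiff M.edgeSet N.edgeSet)).Adj u a := by
  have hu : u ∈ M.verts := by rw [hMv]; simpa using huv
  obtain ⟨a, ha, -⟩ := hM hu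
  exact ⟨a, (Hadj_of_left (hu_not_mem hNu)).mpr ha⟩

include hN hNu hMv in
lemma hexv (huv : u ≠ v) : ∃ a, (SimpleGraph.fromEdgeSet (symmDiff M.edgeSet N.edgeSet)).Adj v a := by
  have hv : v ∈ N.verts := by rw [hNu]; simpa using huv.symm
  obtain ⟨a, ha, -⟩ := hN hv
  exact ⟨a, (Hadj_of_right (hv_not_mem hMv)).mpr ha⟩

include hM hMv hN hNu in
lemma helper {t w : V} (ht : (SimpleGraph.fromEdgeSet (symmDiff M.edgeSet N.edgeSet)).Adj t w)
    (htu : t ≠ u) (htv : t ≠ v) :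
    ∃ z, (SimpleGraph.fromEdgeSet (symmDiff M.edgeSet N.edgeSet)).Adj t z ∧ z ≠ w ∧
      ∀ b, (SimpleGraph.fromEdgeSet (symmDiff M.edgeSet N.edgeSet)).Adj t b → b = w ∨ b = z := by
  have htM : t ∈ M.verts := by rw [hMv]; simpa using htv
  have htN : t ∈ N.verts := by rw [hNu]; simpa using htu
  obtain ⟨mt, hmt, hmtu⟩ := hM htM
  obtain ⟨nt, hnt, hntu⟩ := hN htN
  rcases (Hadj_iff M N).mp ht with ⟨hMtw, hNtw⟩ | ⟨hNtw, hMtw⟩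
  · have hwm : w = mt := hmtu w hMtw
    have hne : ¬ M.Adj t nt := by
      intro hc
      have : nt = mt := hmtu nt hc
      exact hNtw (by rw [hwm, ← this]; exact hnt)
    refine ⟨nt, (Hadj_iff M N).mpr (Or.inr ⟨hnt, hne⟩), ?_, ?_⟩
    · rintro rfl; exact hNtw hnt
    · intro b hb
      rcases (Hadj_iff M N).mp hb with ⟨h1, -⟩ | ⟨h1, -⟩
      · left; rw [hwm]; exact hmtu b h1
      · right; exact hntu b h1
  · have hwn : w = nt := hntu w hNtw
    have hne : ¬ N.Adj t mt := by
      intro hc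
      have : mt = nt := hntu mt hc
      exact hMtw (by rw [hwn, ← this]; exact hmt)
    refine ⟨mt, (Hadj_iff M N).mpr (Or.inl ⟨hmt, hne⟩), ?_, ?_⟩
    · rintro rfl; exact hMtw hmt
    · intro b hb
      rcases (Hadj_iff M N).mp hb with ⟨h1, -⟩ | ⟨h1, -⟩
      · right; exact hmtu b h1
      · left; rw [hwn]; exact hntu b h1

include hM hMv hN hNu in
lemma deg2 : ∀ z a b c, (SimpleGraph.fromEdgeSet (symmDiff M.edgeSet N.edgeSet)).Adj z a →
    (SimpleGraph.fromEdgeSet (symmDiff M.edgeSet N.edgeSet)).Adj z b →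
    (SimpleGraph.fromEdgeSet (symmDiff M.edgeSet N.edgeSet)).Adj z c →
    a = b ∨ a = c ∨ b = c := by
  intro z a b c ha hb hc
  by_cases hzu : z = u
  · subst hzu; exact Or.inl (hs1u hM hNu a b ha hb)
  by_cases hzv : z = v
  · subst hzv; exact Or.inl (hs1v hMv hN a b ha hb)
  obtain ⟨z', -, -, hall⟩ := helper hM hMv hN hNu ha hzu hzv
  rcases hall b hb with h1 | h1
  · exact Or.inl h1.symm
  · rcases hall c hc with h2 | h2
    · exact Or.inr (Or.inl h2.symm)
    · exact Or.inr (Or.inr (h1.trans h2.symm))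

end auxspec
section parity

variable {V : Type*} {G : SimpleGraph V} {u v : V} {M N : G.Subgraph}
variable (hM : M.IsMatching) (hMv : M.verts = ({v}ᶜ : Set V))
  (hN : N.IsMatching) (hNu : N.verts = ({u}ᶜ : Set V))

include hM hMv hN hNu in
lemma parity_aux :
    ∀ {y w : V} (q : (SimpleGraph.fromEdgeSet (symmDiff M.edgeSet N.edgeSet)).Walk y w), w = u →
      ∀ {x : V} (h : (SimpleGraph.fromEdgeSet (symmDiff M.edgeSet N.edgeSet)).Adj x y),
        (Walk.cons h q).IsPath → (M.Adj x y ↔ Even q.length) := by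
  intro y w q
  induction q with
  | nil =>
    rintro rfl x h -
    exact iff_of_true ((Hadj_of_left (hu_not_mem hNu)).mp h.symm).symm Even.zero
  | cons h' q' ih =>
    rename_i y z w
    rintro rfl x h hp
    have hp' := hp.of_cons
    have ihz := ih rfl h' hp'
    rw [Walk.length_cons, Nat.even_add_one, ← ihz]
    have hxz : x ≠ z := by
      have hx : x ∉ (Walk.cons h' q').support := ((Walk.cons_isPath_iff _ _).mp hp).2
      intro hc
      refine hx ?_
      rw [Walk.support_cons]
      exact List.mem_cons_of_mem _ (by rw [hc]; exact q'.start_mem_support)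
    have hyu : y ≠ w := by
      have hy : y ∉ q'.support := ((Walk.cons_isPath_iff _ _).mp hp').2
      intro hc; exact hy (hc ▸ q'.end_mem_support)
    have hyv : y ≠ v := by
      intro hc; subst hc
      exact hxz (hs1v hMv hN x z h.symm h')
    have hyM : y ∈ M.verts := by rw [hMv]; simpa using hyv
    have hyN : y ∈ N.verts := by rw [hNu]; simpa using hyu
    obtain ⟨my, hmy, hmyu⟩ := hM hyM
    obtain ⟨ny, hny, hnyu⟩ := hN hyN
    constructor
    · intro hMxy hMyz
      exact hxz ((hmyu x hMxy.symm).trans (hmyu z hMyz).symm)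
    · intro hnM
      rcases (Hadj_iff M N).mp h with ⟨h1, -⟩ | ⟨h1, -⟩
      · exact h1
      · exfalso
        rcases (Hadj_iff M N).mp h' with ⟨h2, -⟩ | ⟨h2, -⟩
        · exact hnM h2
        · exact hxz ((hnyu x h1.symm).trans (hnyu z h2).symm)

include hM hMv hN hNu in
lemma even_vu (huv : G.Adj u v)
    (q : (SimpleGraph.fromEdgeSet (symmDiff M.edgeSet N.edgeSet)).Walk v u) (hq : q.IsPath) :
    Even q.length := by
  obtain ⟨y, h, q', rfl⟩ := q.exists_eq_cons_of_ne huv.ne'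
  have hparity := parity_aux hM hMv hN hNu q' rfl h hq
  have hnM : ¬ M.Adj v y := fun hc => (hv_not_mem hMv) hc.fst_mem
  rw [Walk.length_cons, Nat.even_add_one]
  exact fun he => hnM (hparity.mpr he)

include hM hMv hN hNu in
lemma closed_aux [DecidableEq V] (huv : G.Adj u v)
    (p : (SimpleGraph.fromEdgeSet (symmDiff M.edgeSet N.edgeSet)).Walk u v) (hp : p.IsPath)
    {a b : V} (hab : (SimpleGraph.fromEdgeSet (symmDiff M.edgeSet N.edgeSet)).Adj a b)
    (ha : a ∈ p.support) : s(a, b) ∈ p.edges := by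
  by_cases hau : a = u
  · subst hau
    obtain ⟨w, hw, hwe⟩ := aux_firstEdge p huv.ne
    rw [hs1u hM hNu b w hab hw]
    exact hwe
  by_cases hav : a = v
  · subst hav
    obtain ⟨w, hw, hwe⟩ := aux_lastEdge p huv.ne
    rw [hs1v hMv hN b w hab hw]
    exact hwe
  · have hspec := p.take_spec ha
    have h₁ : (p.takeUntil a ha).IsPath := hp.takeUntil ha
    have h₂ : (p.dropUntil a ha).IsPath := hp.dropUntil ha
    obtain ⟨w₁, hw₁, he₁⟩ := aux_lastEdge (p.takeUntil a ha) (fun hh => hau hh.symm)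
    obtain ⟨w₂, hw₂, he₂⟩ := aux_firstEdge (p.dropUntil a ha) hav
    have hedges : p.edges = (p.takeUntil a ha).edges ++ (p.dropUntil a ha).edges := by
      conv_lhs => rw [← hspec]
      rw [Walk.edges_append]
    have hw12 : w₁ ≠ w₂ := by
      rintro rfl
      have hnd : p.edges.Nodup := hp.edges_nodup
      rw [hedges, List.nodup_append] at hnd
      exact hnd.2.2 _ he₁ _ he₂ rfl
    rcases deg2 hM hMv hN hNu a b w₁ w₂ hab hw₁ hw₂ with h1 | h1 | h1
    · rw [hedges, List.mem_append]; left; rw [h1]; exact he₁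
    · rw [hedges, List.mem_append]; right; rw [h1]; exact he₂
    · exact absurd h1 hw12

end parity

theorem stmt5 {V : Type*} [Fintype V] {G : SimpleGraph V} {u v : V} (huv : G.Adj u v)
    (M N : G.Subgraph) (hM : M.IsMatching) (hMv : M.verts = ({v}ᶜ : Set V))
    (hN : N.IsMatching) (hNu : N.verts = ({u}ᶜ : Set V)) :
    ∃ p : (SimpleGraph.fromEdgeSet (symmDiff M.edgeSet N.edgeSet)).Walk u v,
      p.IsPath ∧ Even p.length ∧ s(u, v) ∉ p.edges ∧
        ∀ e ∈ (SimpleGraph.fromEdgeSet (symmDiff M.edgeSet N.edgeSet)).edgeSet,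
          e ∉ p.edges →
            ∃ (w : V) (c : (SimpleGraph.fromEdgeSet (symmDiff M.edgeSet N.edgeSet)).Walk w w),
              c.IsCycle ∧ e ∈ c.edges := by
  classical
  have hune : u ≠ v := huv.ne
  have hreach : (SimpleGraph.fromEdgeSet (symmDiff M.edgeSet N.edgeSet)).Reachable u v := by
    apply aux_trap (fun _ => True) (deg2 hM hMv hN hNu) trivial (fun _ _ _ _ => trivial)
      (hs1u hM hNu) (hexu hM hMv hNu hune)
    intro t w htw _ htv htu
    obtain ⟨z, hz, hzw, -⟩ := helper hM hMv hN hNu htw htu htv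
    exact ⟨z, hz, hzw⟩
  obtain ⟨w0⟩ := hreach
  obtain ⟨p, hp⟩ := w0.toPath
  have hclosed : ∀ a b, (SimpleGraph.fromEdgeSet (symmDiff M.edgeSet N.edgeSet)).Adj a b →
      a ∈ p.support → s(a, b) ∈ p.edges :=
    fun a b hab ha => closed_aux hM hMv hN hNu huv p hp hab ha
  refine ⟨p, hp, ?_, ?_, ?_⟩
  · have := even_vu hM hMv hN hNu huv p.reverse hp.reverse
    rwa [Walk.length_reverse] at this
  · intro hmem
    rcases (Hadj_iff M N).mp
        ((SimpleGraph.mem_edgeSet _).mp (p.edges_subset_edgeSet hmem)) with ⟨h1, -⟩ | ⟨h1, -⟩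
    · exact (hv_not_mem hMv) h1.snd_mem
    · exact (hu_not_mem hNu) h1.fst_mem
  · intro e he henp
    induction e using Sym2.ind with
    | _ x y =>
    have hxy : (SimpleGraph.fromEdgeSet (symmDiff M.edgeSet N.edgeSet)).Adj x y :=
      (SimpleGraph.mem_edgeSet _).mp he
    have hxs : x ∉ p.support := fun h => henp (hclosed x y hxy h)
    have hys : y ∉ p.support := fun h => henp (by rw [Sym2.eq_swap]; exact hclosed y x hxy.symm h)
    have hxu : x ≠ u := fun hc => hxs (hc ▸ p.start_mem_support)
    have hxv : x ≠ v := fun hc => hxs (hc ▸ p.end_mem_support)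
    have hyu : y ≠ u := fun hc => hys (hc ▸ p.start_mem_support)
    have hyv : y ≠ v := fun hc => hys (hc ▸ p.end_mem_support)
    have hKadj : ∀ a b, ((SimpleGraph.fromEdgeSet (symmDiff M.edgeSet N.edgeSet)) \
        SimpleGraph.fromEdgeSet {s(x, y)}).Adj a b ↔
        (SimpleGraph.fromEdgeSet (symmDiff M.edgeSet N.edgeSet)).Adj a b ∧ s(a, b) ≠ s(x, y) := by
      intro a b
      rw [SimpleGraph.sdiff_adj]
      refine and_congr_right fun h1 => ?_
      rw [SimpleGraph.fromEdgeSet_adj]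
      simp [h1.ne]
    obtain ⟨z₀, hz₀, hz₀y, hz₀all⟩ := helper hM hMv hN hNu hxy hxu hxv
    have hKx : ∀ a b, ((SimpleGraph.fromEdgeSet (symmDiff M.edgeSet N.edgeSet)) \
        SimpleGraph.fromEdgeSet {s(x, y)}).Adj x a →
        ((SimpleGraph.fromEdgeSet (symmDiff M.edgeSet N.edgeSet)) \
        SimpleGraph.fromEdgeSet {s(x, y)}).Adj x b → a = b := by
      intro a b haa hbb
      rw [hKadj] at haa hbb
      have ha' : a = z₀ := by
        rcases hz₀all a haa.1 with h1 | h1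
        · exact absurd (by rw [h1]) haa.2
        · exact h1
      have hb' : b = z₀ := by
        rcases hz₀all b hbb.1 with h1 | h1
        · exact absurd (by rw [h1]) hbb.2
        · exact h1
      exact ha'.trans hb'.symm
    have hKxex : ∃ a, ((SimpleGraph.fromEdgeSet (symmDiff M.edgeSet N.edgeSet)) \
        SimpleGraph.fromEdgeSet {s(x, y)}).Adj x a :=
      ⟨z₀, (hKadj _ _).mpr ⟨hz₀, fun hc => hz₀y (Sym2.congr_right.mp hc)⟩⟩
    have hK2 : ∀ z a b c, ((SimpleGraph.fromEdgeSet (symmDiff M.edgeSet N.edgeSet)) \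
        SimpleGraph.fromEdgeSet {s(x, y)}).Adj z a →
        ((SimpleGraph.fromEdgeSet (symmDiff M.edgeSet N.edgeSet)) \
        SimpleGraph.fromEdgeSet {s(x, y)}).Adj z b →
        ((SimpleGraph.fromEdgeSet (symmDiff M.edgeSet N.edgeSet)) \
        SimpleGraph.fromEdgeSet {s(x, y)}).Adj z c → a = b ∨ a = c ∨ b = c :=
      fun z a b c ha hb hc => deg2 hM hMv hN hNu z a b c
        ((hKadj _ _).mp ha).1 ((hKadj _ _).mp hb).1 ((hKadj _ _).mp hc).1
    have hPadj : ∀ a b, ((SimpleGraph.fromEdgeSet (symmDiff M.edgeSet N.edgeSet)) \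
        SimpleGraph.fromEdgeSet {s(x, y)}).Adj a b → a ∉ p.support → b ∉ p.support := by
      intro a b hab ha hb
      exact ha (p.snd_mem_support_of_mem_edges (hclosed b a ((hKadj _ _).mp hab).1.symm hb))
    have hreach2 : ((SimpleGraph.fromEdgeSet (symmDiff M.edgeSet N.edgeSet)) \
        SimpleGraph.fromEdgeSet {s(x, y)}).Reachable x y := by
      apply aux_trap (fun t => t ∉ p.support) hK2 hxs hPadj hKx hKxex
      intro t w htw hPt hty htx
      have htu : t ≠ u := fun hc => hPt (hc ▸ p.start_mem_support)
      have htv : t ≠ v := fun hc => hPt (hc ▸ p.end_mem_support)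
      obtain ⟨z, hz, hzw, -⟩ := helper hM hMv hN hNu ((hKadj _ _).mp htw).1 htu htv
      refine ⟨z, (hKadj _ _).mpr ⟨hz, ?_⟩, hzw⟩
      intro hc
      rcases Sym2.mem_iff.mp (hc ▸ Sym2.mem_mk_left t z) with rfl | rfl
      · exact htx rfl
      · exact hty rfl
    have hnb : ¬ (SimpleGraph.fromEdgeSet (symmDiff M.edgeSet N.edgeSet)).IsBridge s(x, y) := by
      rw [SimpleGraph.isBridge_iff]
      intro hnr
      exact hnr hreach2
    by_contra hcon
    push_neg at hcon
    exact hnb ((SimpleGraph.isBridge_iff_adj_and_forall_cycle_notMem he).mpr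
      (fun w c hc => hcon w c hc))
end

section
/- If G is a factor-critical graph with n ≥ 3 vertices, then G has a spanning Sachs subgraph consisting of one odd cycle together with a set of pairwise disjoint edges; consequently η_per(G) = 0. -/
open Polynomial SimpleGraph

section Auxiliary
open scoped Classical

variable {V : Type*} {G : SimpleGraph V}


/-- Partner function of a matching. -/
noncomputable def mpartner {M : G.Subgraph} (hM : M.IsMatching) (x : V) : V :=
  if h : x ∈ M.verts then (hM h).choose else x

lemma mpartner_adj {M : G.Subgraph} (hM : M.IsMatching) {x : V} (hx : x ∈ M.verts) :
    M.Adj x (mpartner hM x) := by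
  rw [mpartner, dif_pos hx]; exact (hM hx).choose_spec.1

lemma mpartner_eq {M : G.Subgraph} (hM : M.IsMatching) {x y : V} (hxy : M.Adj x y) :
    mpartner hM x = y := by
  have hx : x ∈ M.verts := M.edge_vert hxy
  rw [mpartner, dif_pos hx]
  exact ((hM hx).choose_spec.2 y hxy).symm

lemma mpartner_mem {M : G.Subgraph} (hM : M.IsMatching) {x : V} (hx : x ∈ M.verts) :
    mpartner hM x ∈ M.verts := M.edge_vert (mpartner_adj hM hx).symm

lemma mpartner_invol {M : G.Subgraph} (hM : M.IsMatching) {x : V} (hx : x ∈ M.verts) :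
    mpartner hM (mpartner hM x) = x := mpartner_eq hM (mpartner_adj hM hx).symm

lemma IsPath_getVert_inj {u v : V} {p : G.Walk u v} (hp : p.IsPath) :
    ∀ {i j : ℕ}, i ≤ p.length → j ≤ p.length → p.getVert i = p.getVert j → i = j := by
  induction p with
  | nil => intro i j hi hj _; simp at hi hj; omega
  | @cons a b c h q ih =>
    rw [Walk.cons_isPath_iff] at hp
    intro i j hi hj hij
    simp only [Walk.length_cons] at hi hj
    match i, j with
    | 0, 0 => rfl
    | 0, (j+1) =>
      exfalso
      apply hp.2
      rw [Walk.mem_support_iff_exists_getVert]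
      exact ⟨j, by simpa [Walk.getVert_cons_succ] using hij.symm, by omega⟩
    | (i+1), 0 =>
      exfalso
      apply hp.2
      rw [Walk.mem_support_iff_exists_getVert]
      exact ⟨i, by simpa [Walk.getVert_cons_succ] using hij, by omega⟩
    | (i+1), (j+1) =>
      have := ih hp.1 (i := i) (j := j) (by omega) (by omega) (by simpa [Walk.getVert_cons_succ] using hij)
      omega

lemma getVert_mem_support {u v : V} (p : G.Walk u v) {i : ℕ} (hi : i ≤ p.length) :
    p.getVert i ∈ p.support :=
  Walk.mem_support_iff_exists_getVert.mpr ⟨i, rfl, hi⟩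



lemma cycle_tail_next_adj {v : V} (c : G.Walk v v) (hnd : c.support.tail.Nodup)
    {x : V} (hx : x ∈ c.support.tail) :
    G.Adj x (c.support.tail.next x hx) := by
  set L := c.support.tail with hL
  have hLne : L ≠ [] := List.ne_nil_of_mem hx
  have hlen : L.length ≠ 0 := fun h => hLne (List.eq_nil_of_length_eq_zero h)
  have hlastv : L.getLast hLne = v := by
    have h2 := c.getLast_support
    rw [List.getLast_tail]
    exact h2
  have hchain : List.Chain G.Adj v L := by
    have := c.isChain_adj_support
    rw [c.support_eq_cons] at this
    exact this
  replace hchain : (∀ h : 0 < L.length, G.Adj v (L.get ⟨0, h⟩)) ∧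
      ∀ (i : ℕ) (h : i < L.length - 1),
        G.Adj (L.get ⟨i, by omega⟩) (L.get ⟨i+1, by omega⟩) := by
    have h := List.isChain_iff_getElem.mp hchain
    exact ⟨fun h0 => h 0 (by simp; omega),
      fun i hi => h (i+1) (by simp; omega)⟩
  obtain ⟨i, hi⟩ := List.mem_iff_get.mp hx
  subst hi
  rw [show ∀ h, L.next (L.get i) h = L.get ⟨((i : ℕ) + 1) % L.length, Nat.mod_lt _ (by omega)⟩
    from fun h => List.next_getElem L hnd i i.isLt]
  have key : ∀ (j : Fin L.length), (j : ℕ) = ((i : ℕ) + 1) % L.length →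
      G.Adj (L.get i) (L.get j) := by
    intro j hj
    by_cases hlt : (i : ℕ) + 1 < L.length
    · have hjv : j = ⟨(i : ℕ) + 1, hlt⟩ := Fin.ext (by rw [hj]; exact Nat.mod_eq_of_lt hlt)
      rw [hjv]
      exact hchain.2 i (by omega)
    · have hieq : (i : ℕ) = L.length - 1 := by have := i.isLt; omega
      have hmod : ((i : ℕ) + 1) % L.length = 0 := by
        rw [hieq, Nat.sub_add_cancel (by omega)]; exact Nat.mod_self _
      have hjv : j = ⟨0, by omega⟩ := Fin.ext (by simp [hj, hmod])
      have hgv : L.get i = v := by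
        rw [← hlastv, List.getLast_eq_getElem, List.get_eq_getElem]
        congr 1
      rw [hjv, hgv]
      exact hchain.1 (by omega)
  exact key _ rfl

lemma exists_perm_adj [Fintype V] {v : V} {c : G.Walk v v} {M : G.Subgraph}
    (hc : c.IsCycle) (hM : M.IsMatching)
    (hdisj : Disjoint M.verts {w | w ∈ c.support})
    (hunion : M.verts ∪ {w | w ∈ c.support} = Set.univ)
    :
    ∃ σ : Equiv.Perm V, ∀ i, G.Adj i (σ i) := by
  set L := c.support.tail with hL
  have hnd : L.Nodup := hc.support_nodup
  have hLne : L ≠ [] := by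
    intro h
    have h1 : c.support = [v] := by rw [c.support_eq_cons, ← hL, h]
    have h2 : c.support.length = c.length + 1 := c.length_support
    have h3 := hc.three_le_length
    rw [h1] at h2
    simp only [List.length_singleton] at h2
    omega
  have hvL : v ∈ L := by
    have : L.getLast hLne = v := by
      have h2 := c.getLast_support
      rw [List.getLast_tail]
      exact h2
    rw [← this]
    exact List.getLast_mem hLne
  have hsupL : {w | w ∈ c.support} = {w | w ∈ L} := by
    ext w
    rw [c.support_eq_cons]
    simp only [Set.mem_setOf_eq, List.mem_cons, ← hL]
    constructor
    · rintro (rfl | h)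
      · exact hvL
      · exact h
    · exact Or.inr
  have hmemL : ∀ x : V, x ∉ M.verts → x ∈ L := by
    intro x hx
    have : x ∈ M.verts ∪ {w | w ∈ c.support} := hunion ▸ Set.mem_univ x
    rcases this with h | h
    · exact absurd h hx
    · rwa [hsupL] at h
  have hLM : ∀ x : V, x ∈ L → x ∉ M.verts := by
    intro x hx hxM
    exact Set.disjoint_left.mp hdisj hxM (by rw [hsupL]; exact hx)
  set f : V → V := fun x => if x ∈ M.verts then mpartner hM x else L.formPerm x with hf
  have hfM : ∀ x ∈ M.verts, f x ∈ M.verts := by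
    intro x hx
    simp only [hf, if_pos hx]
    exact M.edge_vert (mpartner_adj hM hx).symm
  have hfL : ∀ x : V, x ∉ M.verts → f x ∈ L := by
    intro x hx
    simp only [hf, if_neg hx]
    rw [List.formPerm_apply_mem_eq_next hnd _ (hmemL x hx)]
    exact List.next_mem _ _ _
  have hinj : Function.Injective f := by
    intro a b hab
    by_cases ha : a ∈ M.verts <;> by_cases hb : b ∈ M.verts
    · have : mpartner hM a = mpartner hM b := by simpa [hf, if_pos ha, if_pos hb] using hab
      have := congrArg (mpartner hM) this
      rwa [mpartner_invol hM ha, mpartner_invol hM hb] at this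
    · exact absurd (hab ▸ hfM a ha) (hLM _ (hfL b hb))
    · exact absurd (hab.symm ▸ hfM b hb) (hLM _ (hfL a ha))
    · have : L.formPerm a = L.formPerm b := by simpa [hf, if_neg ha, if_neg hb] using hab
      exact L.formPerm.injective this
  refine ⟨Equiv.ofBijective f ((Finite.injective_iff_bijective).mp hinj), fun i => ?_⟩
  have : (Equiv.ofBijective f ((Finite.injective_iff_bijective).mp hinj)) i = f i := rfl
  rw [this]
  by_cases hi : i ∈ M.verts
  · simp only [hf, if_pos hi]
    exact M.adj_sub (mpartner_adj hM hi)
  · simp only [hf, if_neg hi]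
    have hiL := hmemL i hi
    rw [List.formPerm_apply_mem_eq_next hnd _ hiL]
    exact cycle_tail_next_adj c hnd hiL



variable [Fintype V]

noncomputable def adjInt (G : SimpleGraph V) : Matrix V V ℤ :=
  Matrix.of fun i j => if G.Adj i j then (1 : ℤ) else 0

lemma permPoly_eval_zero (G : SimpleGraph V) :
    (permPoly G).eval 0 = (-1)^(Fintype.card V) * (adjInt G).permanent := by
  rw [permPoly, Matrix.permanent, eval_finset_sum, Matrix.permanent, Finset.mul_sum]
  refine Finset.sum_congr rfl fun σ _ => ?_
  rw [eval_prod]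
  have hcard : ((-1 : ℤ)) ^ (Fintype.card V) = ∏ _i : V, (-1 : ℤ) := by
    rw [Finset.prod_const, Fintype.card]
  rw [hcard, ← Finset.prod_mul_distrib]
  refine Finset.prod_congr rfl fun i _ => ?_
  simp only [Matrix.sub_apply, Matrix.smul_apply, Matrix.one_apply, Matrix.of_apply,
    smul_eq_mul, eval_sub, eval_mul, eval_X, zero_mul, adjInt]
  split_ifs <;> simp

lemma one_le_permanent (G : SimpleGraph V) (σ : Equiv.Perm V) (hσ : ∀ i, G.Adj i (σ i)) :
    1 ≤ (adjInt G).permanent := by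
  rw [Matrix.permanent]
  have h1 : ∏ i, (adjInt G) (σ i) i = 1 := by
    refine Finset.prod_eq_one fun i _ => ?_
    simp only [adjInt, Matrix.of_apply, if_pos (hσ i).symm]
  calc (1 : ℤ) = ∏ i, (adjInt G) (σ i) i := h1.symm
    _ ≤ ∑ τ : Equiv.Perm V, ∏ i, (adjInt G) (τ i) i := by
        refine Finset.single_le_sum (f := fun τ : Equiv.Perm V => ∏ i, (adjInt G) (τ i) i) (fun τ _ => ?_) (Finset.mem_univ σ)
        refine Finset.prod_nonneg fun i _ => ?_
        simp only [adjInt, Matrix.of_apply]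
        split_ifs <;> norm_num

lemma perNullity_eq_zero (G : SimpleGraph V) (σ : Equiv.Perm V) (hσ : ∀ i, G.Adj i (σ i)) :
    perNullity G = 0 := by
  rw [perNullity]
  apply Polynomial.rootMultiplicity_eq_zero
  rw [Polynomial.IsRoot, permPoly_eval_zero]
  have h1 := one_le_permanent G σ hσ
  intro h
  rcases mul_eq_zero.mp h with h2 | h2
  · exact absurd h2 (pow_ne_zero _ (by norm_num))
  · omega

lemma matching_misses (hfc : IsFactorCritical G) (z : V) :
    ∃ N : G.Subgraph, N.IsMatching ∧ N.verts = ({z}ᶜ : Set V) := by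
  obtain ⟨M0, hM0⟩ := hfc z
  refine ⟨M0.map (SimpleGraph.Embedding.induce ({z}ᶜ : Set V)).toHom,
    hM0.1.map _ Subtype.val_injective, ?_⟩
  have hv : M0.verts = Set.univ := Subgraph.isSpanning_iff.mp hM0.2
  rw [Subgraph.map_verts, hv, Set.image_univ]
  ext x
  simp [SimpleGraph.Embedding.comap_apply]


theorem main_structure [Fintype V] (hfc : IsFactorCritical G) (hn : 3 ≤ Fintype.card V) :
    ∃ (v : V) (c : G.Walk v v) (M : G.Subgraph),
        c.IsCycle ∧ Odd c.length ∧ M.IsMatching ∧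
        Disjoint M.verts {w | w ∈ c.support} ∧
        M.verts ∪ {w | w ∈ c.support} = Set.univ := by
  classical
  have hne : Nonempty V := Fintype.card_pos_iff.mp (by omega)
  obtain ⟨v⟩ := hne
  obtain ⟨z, hz⟩ := Fintype.exists_ne_of_one_lt_card (by omega) v
  obtain ⟨Mz, hMz, hMzv⟩ := matching_misses hfc z
  have hvMz : v ∈ Mz.verts := by rw [hMzv]; simpa using hz.symm
  set u := mpartner hMz v with hu
  have hvu : G.Adj v u := Mz.adj_sub (mpartner_adj hMz hvMz)
  have hune : u ≠ v := hvu.ne'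
  obtain ⟨Mu, hMu, hMuv⟩ := matching_misses hfc u
  obtain ⟨Mv, hMv, hMvv⟩ := matching_misses hfc v
  have hmemMu : ∀ x : V, x ≠ u → x ∈ Mu.verts := fun x hx => by rw [hMuv]; simpa using hx
  have hmemMv : ∀ x : V, x ≠ v → x ∈ Mv.verts := fun x hx => by rw [hMvv]; simpa using hx
  have hnotMu : u ∉ Mu.verts := by rw [hMuv]; simp
  have hnotMv : v ∉ Mv.verts := by rw [hMvv]; simp
  set S : SimpleGraph V := symmDiff Mu.spanningCoe Mv.spanningCoe with hS
  have hS_adj : ∀ x y, S.Adj x y ↔ (Mu.Adj x y ∧ ¬ Mv.Adj x y) ∨ (Mv.Adj x y ∧ ¬ Mu.Adj x y) := by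
    intro x y
    rw [hS]
    simp [symmDiff_def]
  have hSG : S ≤ G := le_trans symmDiff_le_sup (sup_le Mu.spanningCoe_le Mv.spanningCoe_le)
  have hadj_iff : ∀ (N : G.Subgraph) (hN : N.IsMatching) (x y : V), x ∈ N.verts →
      (N.Adj x y ↔ y = mpartner hN x) := by
    intro N hN x y hx
    exact ⟨fun h => (mpartner_eq hN h).symm, fun h => h ▸ mpartner_adj hN hx⟩
  have hNSu : S.neighborSet u = {mpartner hMv u} := by
    ext y
    simp only [mem_neighborSet, Set.mem_singleton_iff, hS_adj]
    have h1 : ¬ Mu.Adj u y := fun h => hnotMu (Mu.edge_vert h)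
    have h2 := hadj_iff Mv hMv u y (hmemMv u hune)
    tauto
  have hdegu : S.degree u = 1 := by
    have h1 : S.degree u = (S.neighborSet u).toFinset.card := by
      rw [SimpleGraph.degree, SimpleGraph.neighborFinset_def]
    rw [h1, Set.toFinset_congr hNSu]
    simp
  have hNSmid : ∀ x : V, x ≠ u → x ≠ v → ∀ y,
      (S.Adj x y ↔ (y = mpartner hMu x ∧ y ≠ mpartner hMv x) ∨
        (y = mpartner hMv x ∧ y ≠ mpartner hMu x)) := by
    intro x hxu hxv y
    rw [hS_adj, hadj_iff Mu hMu x y (hmemMu x hxu), hadj_iff Mv hMv x y (hmemMv x hxv)]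
  have hdeg_even : ∀ x : V, x ≠ u → x ≠ v → Even (S.degree x) := by
    intro x hxu hxv
    have h1 : S.degree x = (S.neighborSet x).toFinset.card := by
      rw [SimpleGraph.degree, SimpleGraph.neighborFinset_def]
    by_cases hww : mpartner hMu x = mpartner hMv x
    · have hset : S.neighborSet x = ∅ := by
        ext y
        simp only [mem_neighborSet, hNSmid x hxu hxv y, Set.mem_empty_iff_false, iff_false]
        rw [hww]
        rintro (⟨rfl, h⟩ | ⟨rfl, h⟩) <;> exact h rfl
      rw [h1, Set.toFinset_congr hset]
      simp
    · have hset : S.neighborSet x = {mpartner hMu x, mpartner hMv x} := by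
        ext y
        simp only [mem_neighborSet, hNSmid x hxu hxv y, Set.mem_insert_iff,
          Set.mem_singleton_iff]
        constructor
        · rintro (⟨rfl, _⟩ | ⟨rfl, _⟩)
          · exact Or.inl rfl
          · exact Or.inr rfl
        · rintro (rfl | rfl)
          · exact Or.inl ⟨rfl, hww⟩
          · exact Or.inr ⟨rfl, Ne.symm hww⟩
      rw [h1, Set.toFinset_congr hset]
      rw [Set.toFinset_insert, Set.toFinset_singleton]
      rw [Finset.card_pair hww]
      exact even_two
  
  set R : Set V := {x | S.Reachable u x} with hR
  have huR : u ∈ R := Reachable.refl u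
  have hclosed : ∀ x y : V, x ∈ R → S.Adj x y → y ∈ R := fun x y hx h => hx.trans h.reachable
  set T : SimpleGraph ↥R := S.comap (Function.Embedding.subtype _) with hT
  have hTdeg : ∀ x : ↥R, T.degree x = S.degree x.val := by
    intro x
    rw [← card_neighborSet_eq_degree, ← card_neighborSet_eq_degree]
    refine Fintype.card_congr
      ⟨fun y => ⟨y.val.val, y.prop⟩,
       fun y => ⟨⟨y.val, hclosed _ _ x.prop y.prop⟩, y.prop⟩, ?_, ?_⟩
    · intro y; apply Subtype.ext; apply Subtype.ext; rfl
    · intro y; apply Subtype.ext; rfl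
  have hvR : v ∈ R := by
    by_contra hvR
    have heven := T.even_card_odd_degree_vertices
    have huF : (⟨u, huR⟩ : ↥R) ∈ Finset.univ.filter (fun x : ↥R => Odd (T.degree x)) := by
      rw [Finset.mem_filter]
      refine ⟨Finset.mem_univ _, ?_⟩
      rw [hTdeg, hdegu]
      exact odd_one
    have h2 : 1 < (Finset.univ.filter (fun x : ↥R => Odd (T.degree x))).card := by
      have hpos : 0 < (Finset.univ.filter (fun x : ↥R => Odd (T.degree x))).card :=
        Finset.card_pos.mpr ⟨_, huF⟩
      rcases heven with ⟨k, hk⟩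
      omega
    obtain ⟨x, hxF, hxne⟩ := Finset.exists_mem_ne h2 ⟨u, huR⟩
    rw [Finset.mem_filter] at hxF
    have hodd : Odd (S.degree x.val) := by rw [← hTdeg]; exact hxF.2
    have hxu : x.val ≠ u := fun h => hxne (Subtype.ext h)
    have hxv : x.val ≠ v := fun h => hvR (h ▸ x.prop)
    have heven' := hdeg_even x.val hxu hxv
    rw [Nat.even_iff] at heven'
    rw [Nat.odd_iff] at hodd
    omega
  have hreach : S.Reachable u v := hvR
  obtain ⟨p0⟩ := hreach
  set p : S.Walk u v := p0.bypass with hpdef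
  have hp : p.IsPath := p0.bypass_isPath
  
  have hsupp : ∀ x ∈ p.support, x ≠ v → mpartner hMv x ∈ p.support := by
    intro x hx hxv
    obtain ⟨i, hgv, hi⟩ := Walk.mem_support_iff_exists_getVert.mp hx
    have hlenpos : 0 < p.length := by
      rcases Nat.eq_zero_or_pos p.length with h | h
      · exact absurd (Walk.eq_of_length_eq_zero h) hune
      · exact h
    by_cases hi0 : i = 0
    · have hxu : x = u := by rw [← hgv, hi0, Walk.getVert_zero]
      have hadj : S.Adj u (p.getVert 1) := by
        have := p.adj_getVert_succ hlenpos
        rwa [Walk.getVert_zero] at this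
      have h1 : p.getVert 1 ∈ S.neighborSet u := hadj
      rw [hNSu, Set.mem_singleton_iff] at h1
      rw [hxu, ← h1]
      exact getVert_mem_support p (by omega)
    · have hilt : i < p.length := by
        rcases Nat.lt_or_ge i p.length with h | h
        · exact h
        · exfalso
          apply hxv
          rw [← hgv]
          have hieq : i = p.length := by omega
          rw [hieq, Walk.getVert_length]
      have hxu : x ≠ u := by
        intro h
        apply hi0
        exact IsPath_getVert_inj hp hi (by omega)
          (by rw [hgv, h, Walk.getVert_zero])
      have ha : S.Adj x (p.getVert (i+1)) := by
        have := p.adj_getVert_succ hilt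
        rwa [hgv] at this
      have hb : S.Adj x (p.getVert (i-1)) := by
        have := p.adj_getVert_succ (show i - 1 < p.length by omega)
        have h' : i - 1 + 1 = i := by omega
        rw [h', hgv] at this
        exact this.symm
      have hne2 : p.getVert (i+1) ≠ p.getVert (i-1) := by
        intro h
        have := IsPath_getVert_inj hp (show i+1 ≤ p.length by omega)
          (show i-1 ≤ p.length by omega) h
        omega
      have h1 := (hNSmid x hxu hxv (p.getVert (i+1))).mp ha
      have h2 := (hNSmid x hxu hxv (p.getVert (i-1))).mp hb
      rcases h1 with ⟨h1, -⟩ | ⟨h1, -⟩ <;> rcases h2 with ⟨h2, -⟩ | ⟨h2, -⟩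
      · exact absurd (h1.trans h2.symm) hne2
      · rw [← h2]; exact getVert_mem_support p (by omega)
      · rw [← h1]; exact getVert_mem_support p (by omega)
      · exact absurd (h1.trans h2.symm) hne2
  have hsupp_c : ∀ x : V, x ∉ p.support → mpartner hMv x ∉ p.support := by
    intro x hx hmem
    have hxv : x ≠ v := fun h => hx (h ▸ p.end_mem_support)
    have hyv : mpartner hMv x ≠ v := by
      intro h
      have hmm := mpartner_mem hMv (hmemMv x hxv)
      rw [h] at hmm
      exact hnotMv hmm
    have hss := hsupp _ hmem hyv
    rw [mpartner_invol hMv (hmemMv x hxv)] at hss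
    exact hx hss
  have hedges : ∀ e ∈ p.edges, e ∈ G.edgeSet := fun e he =>
    (edgeSet_mono hSG) (p.edges_subset_edgeSet he)
  set p' : G.Walk u v := p.transfer G hedges with hp'def
  have hcyc : (Walk.cons hvu p').IsCycle := by
    rw [Walk.cons_isCycle_iff]
    refine ⟨hp.transfer _, ?_⟩
    intro hmem
    have hmem' : s(v, u) ∈ p.edges := by rwa [Walk.edges_transfer] at hmem
    have hSvu : S.Adj v u := by
      have := p.edges_subset_edgeSet hmem'
      rwa [SimpleGraph.mem_edgeSet] at this
    rw [hS_adj] at hSvu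
    rcases hSvu with ⟨h, -⟩ | ⟨h, -⟩
    · exact hnotMu (Mu.edge_vert h.symm)
    · exact hnotMv (Mv.edge_vert h)
  set c : G.Walk v v := Walk.cons hvu p' with hcdef
  set Cs : Set V := {w | w ∈ p.support} with hCsdef
  have hCs : {w | w ∈ c.support} = Cs := by
    ext w
    simp only [hCsdef, Set.mem_setOf_eq, hcdef, Walk.support_cons, List.mem_cons,
      hp'def, Walk.support_transfer]
    constructor
    · rintro (rfl | h)
      · exact p.end_mem_support
      · exact h
    · exact Or.inr
  set M : G.Subgraph := Mv.induce Csᶜ with hM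
  have hMverts : M.verts = Csᶜ := rfl
  have hMmatch : M.IsMatching := by
    intro x hx
    have hx' : x ∉ Cs := hx
    have hxv : x ≠ v := fun h => hx' (by rw [hCsdef]; exact h ▸ p.end_mem_support)
    have hxMv := hmemMv x hxv
    refine ⟨mpartner hMv x, ⟨hx, hsupp_c x hx', mpartner_adj hMv hxMv⟩, ?_⟩
    rintro y ⟨-, -, hadj⟩
    exact (mpartner_eq hMv hadj).symm
  -- cardinalities
  have hcardV : Even (Fintype.card V - 1) := by
    have he := hMv.even_card
    have hcard : Mv.verts.toFinset.card = Fintype.card V - 1 := by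
      rw [Set.toFinset_congr hMvv, Set.toFinset_compl, Set.toFinset_singleton,
        Finset.card_compl, Finset.card_singleton]
    rwa [hcard] at he
  have hCseven : Even (Csᶜ.ncard) := by
    have he := hMmatch.even_card
    have hcard : M.verts.toFinset.card = Csᶜ.ncard := (Set.ncard_eq_toFinset_card' _).symm
    rw [hcard] at he
    exact he
  have hCscard : Cs.ncard = p.length + 1 := by
    have h1 : Cs.toFinset = p.support.toFinset := by
      ext w
      simp [hCsdef]
    rw [Set.ncard_eq_toFinset_card', h1,
      List.toFinset_card_of_nodup hp.support_nodup, Walk.length_support]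
  have hsum : Cs.ncard + Csᶜ.ncard = Fintype.card V := by rw [Set.ncard_add_ncard_compl Cs, Nat.card_eq_fintype_card]
  have hclen : c.length = p.length + 1 := by
    rw [hcdef, Walk.length_cons, hp'def, Walk.length_transfer]
  have hodd : Odd c.length := by
    rw [hclen, ← hCscard]
    rcases hCseven with ⟨k, hk⟩
    rcases hcardV with ⟨m, hm⟩
    rw [Nat.odd_iff]
    omega
  refine ⟨v, c, M, hcyc, hodd, hMmatch, ?_, ?_⟩
  · rw [hCs, hMverts]
    exact disjoint_compl_left
  · rw [hCs, hMverts]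
    exact Set.compl_union_self Cs

end Auxiliary

theorem stmt7 {V : Type*} [Fintype V] (G : SimpleGraph V)
    (hfc : IsFactorCritical G) (hn : 3 ≤ Fintype.card V) :
    (∃ (v : V) (c : G.Walk v v) (M : G.Subgraph),
        c.IsCycle ∧ Odd c.length ∧ M.IsMatching ∧
        Disjoint M.verts {w | w ∈ c.support} ∧
        M.verts ∪ {w | w ∈ c.support} = Set.univ) ∧
      perNullity G = 0 := by
  classical
  obtain ⟨v, c, M, hc, hodd, hm, hdisj, hunion⟩ := main_structure hfc hn
  obtain ⟨σ, hσ⟩ := exists_perm_adj hc hm hdisj hunion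
  exact ⟨⟨v, c, M, hc, hodd, hm, hdisj, hunion⟩, perNullity_eq_zero G σ hσ⟩
end

section
/- Let G be a connected graph with matching number ν(G) and n vertices. Then η_per(G) = n − 2ν(G) if and only if either G has a perfect matching or the subgraph of G induced by D(G) has no edges, where D(G) is the set of vertices missed by at least one maximum matching of G. -/
open Polynomial SimpleGraph

open scoped Classical

namespace Stmt8Aux

set_option linter.unusedSectionVars false

variable {V : Type*} [Fintype V] (G : SimpleGraph V)

/-- support of a map as a finset -/
noncomputable def psupp (f : V → V) : Finset V := Finset.univ.filter (fun v => f v ≠ v)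

lemma mem_psupp {f : V → V} {v : V} : v ∈ psupp f ↔ f v ≠ v := by simp [psupp]

/-- A pairing: an involution matching adjacent vertices. -/
def IsPairing (f : V → V) : Prop :=
  Function.Involutive f ∧ ∀ v, f v ≠ v → G.Adj v (f v)

variable {G}

/-- the pairing function of a matching -/
noncomputable def mOf {M : G.Subgraph} (hM : M.IsMatching) : V → V :=
  fun v => if h : v ∈ M.verts then (hM h).choose else v

lemma mOf_adj {M : G.Subgraph} (hM : M.IsMatching) {v : V} (hv : v ∈ M.verts) :
    M.Adj v (mOf hM v) := by
  rw [mOf, dif_pos hv]; exact (hM hv).choose_spec.1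

lemma mOf_eq_of_adj {M : G.Subgraph} (hM : M.IsMatching) {v w : V} (h : M.Adj v w) :
    mOf hM v = w := by
  have hv : v ∈ M.verts := M.edge_vert h
  rw [mOf, dif_pos hv]
  exact ((hM hv).choose_spec.2 w h).symm

lemma mOf_not_mem {M : G.Subgraph} (hM : M.IsMatching) {v : V} (hv : v ∉ M.verts) :
    mOf hM v = v := by rw [mOf, dif_neg hv]

lemma mOf_ne {M : G.Subgraph} (hM : M.IsMatching) {v : V} (hv : v ∈ M.verts) :
    mOf hM v ≠ v := by
  intro h
  exact (M.adj_sub (mOf_adj hM hv)).ne' (by rw [h])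

lemma mOf_mem_iff {M : G.Subgraph} (hM : M.IsMatching) {v : V} :
    mOf hM v ≠ v ↔ v ∈ M.verts := by
  constructor
  · intro h; by_contra hv; exact h (mOf_not_mem hM hv)
  · exact mOf_ne hM

lemma mOf_pairing {M : G.Subgraph} (hM : M.IsMatching) : IsPairing G (mOf hM) := by
  constructor
  · intro v
    by_cases hv : v ∈ M.verts
    · exact mOf_eq_of_adj hM (mOf_adj hM hv).symm
    · rw [mOf_not_mem hM hv, mOf_not_mem hM hv]
  · intro v h
    have hv : v ∈ M.verts := (mOf_mem_iff hM).1 h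
    exact M.adj_sub (mOf_adj hM hv)

lemma psupp_mOf {M : G.Subgraph} (hM : M.IsMatching) :
    (psupp (mOf hM) : Set V) = M.verts := by
  ext v; simp [mem_psupp, mOf_mem_iff hM]

/-- the key counting lemma: a matching has twice as many covered vertices as edges -/
lemma verts_ncard_eq {M : G.Subgraph} (hM : M.IsMatching) :
    M.verts.ncard = 2 * M.edgeSet.ncard := by
  classical
  have hvf : M.verts.Finite := Set.toFinite _
  have hef : M.edgeSet.Finite := Set.toFinite _
  rw [Set.ncard_eq_toFinset_card M.verts hvf, Set.ncard_eq_toFinset_card M.edgeSet hef]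
  have hmap : ∀ v ∈ hvf.toFinset, s(v, mOf hM v) ∈ hef.toFinset := by
    intro v hv
    rw [Set.Finite.mem_toFinset] at hv ⊢
    exact (mOf_adj hM hv)
  rw [Finset.card_eq_sum_card_fiberwise hmap]
  have h2 : ∀ e ∈ hef.toFinset,
      (hvf.toFinset.filter fun v => s(v, mOf hM v) = e).card = 2 := by
    intro e he
    rw [Set.Finite.mem_toFinset] at he
    induction' e with a b
    have hab : M.Adj a b := he
    have hane : a ≠ b := hab.ne
    have : hvf.toFinset.filter (fun v => s(v, mOf hM v) = s(a, b)) = {a, b} := by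
      ext v
      simp only [Finset.mem_filter, Set.Finite.mem_toFinset, Finset.mem_insert,
        Finset.mem_singleton]
      constructor
      · rintro ⟨hv, hs⟩
        rw [Sym2.eq_iff] at hs
        rcases hs with ⟨h1, _⟩ | ⟨h2, _⟩
        · exact Or.inl h1
        · exact Or.inr h2
      · rintro (rfl | rfl)
        · exact ⟨M.edge_vert hab, by rw [mOf_eq_of_adj hM hab]⟩
        · exact ⟨M.edge_vert hab.symm, by rw [mOf_eq_of_adj hM hab.symm, Sym2.eq_swap]⟩
    rw [this, Finset.card_pair hane]
  rw [Finset.sum_congr rfl h2, Finset.sum_const, smul_eq_mul, mul_comm]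

/-- the matching subgraph of a pairing -/
noncomputable def sgOf (f : V → V) (hf : IsPairing G f) : G.Subgraph where
  verts := {v | f v ≠ v}
  Adj u v := f u = v ∧ u ≠ v
  adj_sub := by rintro u v ⟨rfl, h⟩; exact hf.2 u (fun hc => h hc.symm)
  edge_vert := by rintro u v ⟨rfl, h⟩; exact fun hc => h hc.symm
  symm := ⟨by rintro u v ⟨rfl, h⟩; exact ⟨hf.1 u, Ne.symm h⟩⟩

lemma sgOf_matching (f : V → V) (hf : IsPairing G f) : (sgOf f hf).IsMatching := by
  intro v hv
  refine ⟨f v, ⟨rfl, fun hc => hv hc.symm⟩, ?_⟩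
  rintro w ⟨rfl, _⟩; rfl

lemma sgOf_verts (f : V → V) (hf : IsPairing G f) :
    (sgOf f hf).verts = (psupp f : Set V) := by
  ext v; simp [sgOf, mem_psupp]

lemma sgOf_edge_ncard (f : V → V) (hf : IsPairing G f) :
    (psupp f).card = 2 * (sgOf f hf).edgeSet.ncard := by
  have := verts_ncard_eq (sgOf_matching f hf)
  rwa [sgOf_verts f hf, Set.ncard_coe_finset] at this

variable (G)

lemma bddAbove_MS : BddAbove {n | ∃ M : G.Subgraph, M.IsMatching ∧ M.edgeSet.ncard = n} := by
  refine ⟨Fintype.card (Sym2 V), ?_⟩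
  rintro n ⟨M, _, rfl⟩
  calc M.edgeSet.ncard ≤ (Set.univ : Set (Sym2 V)).ncard :=
        Set.ncard_le_ncard (Set.subset_univ _) (Set.toFinite _)
    _ = Fintype.card (Sym2 V) := by rw [Set.ncard_univ, Nat.card_eq_fintype_card]

lemma zero_mem_MS : 0 ∈ {n | ∃ M : G.Subgraph, M.IsMatching ∧ M.edgeSet.ncard = n} := by
  refine ⟨⊥, ?_, ?_⟩
  · intro v hv
    simp only [SimpleGraph.Subgraph.verts_bot, Set.mem_empty_iff_false] at hv
  · simp [SimpleGraph.Subgraph.edgeSet_bot]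

lemma exists_nu_matching : ∃ M : G.Subgraph, M.IsMatching ∧ M.edgeSet.ncard = matchingNumber G :=
  Nat.sSup_mem ⟨0, zero_mem_MS G⟩ (bddAbove_MS G)

lemma matching_le_nu (M : G.Subgraph) (hM : M.IsMatching) :
    M.edgeSet.ncard ≤ matchingNumber G :=
  le_csSup (bddAbove_MS G) ⟨M, hM, rfl⟩

lemma isMaximumMatching_iff (M : G.Subgraph) :
    IsMaximumMatching M ↔ M.IsMatching ∧ M.edgeSet.ncard = matchingNumber G := by
  constructor
  · rintro ⟨h1, h2⟩
    refine ⟨h1, le_antisymm (matching_le_nu G M h1) ?_⟩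
    obtain ⟨N, hN, hNcard⟩ := exists_nu_matching G
    rw [← hNcard]; exact h2 N hN
  · rintro ⟨h1, h2⟩
    exact ⟨h1, fun N hN => h2 ▸ matching_le_nu G N hN⟩

lemma pairing_card_le (f : V → V) (hf : IsPairing G f) :
    (psupp f).card ≤ 2 * matchingNumber G := by
  rw [sgOf_edge_ncard f hf]
  exact Nat.mul_le_mul_left 2 (matching_le_nu G _ (sgOf_matching f hf))

/-- a maximum pairing -/
def IsMaxPairing (f : V → V) : Prop :=
  IsPairing G f ∧ (psupp f).card = 2 * matchingNumber G

lemma exists_maxPairing : ∃ f, IsMaxPairing G f := by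
  obtain ⟨M, hM, hcard⟩ := exists_nu_matching G
  refine ⟨mOf hM, mOf_pairing hM, ?_⟩
  have h1 : ((psupp (mOf hM) : Finset V) : Set V).ncard = M.verts.ncard := by
    rw [psupp_mOf hM]
  rw [Set.ncard_coe_finset] at h1
  rw [h1, verts_ncard_eq hM, hcard]

lemma mem_DSet_iff (v : V) :
    v ∈ DSet G ↔ ∃ f, IsMaxPairing G f ∧ f v = v := by
  constructor
  · rintro ⟨M, hM, hv⟩
    rw [isMaximumMatching_iff] at hM
    refine ⟨mOf hM.1, ⟨mOf_pairing hM.1, ?_⟩, mOf_not_mem hM.1 hv⟩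
    have h1 : ((psupp (mOf hM.1) : Finset V) : Set V).ncard = M.verts.ncard := by
      rw [psupp_mOf hM.1]
    rw [Set.ncard_coe_finset] at h1
    rw [h1, verts_ncard_eq hM.1, hM.2]
  · rintro ⟨f, ⟨hf, hcard⟩, hfv⟩
    refine ⟨sgOf f hf, ?_, ?_⟩
    · rw [isMaximumMatching_iff]
      refine ⟨sgOf_matching f hf, ?_⟩
      have := (sgOf_edge_ncard f hf).symm.trans hcard
      omega
    · rw [sgOf_verts f hf]
      simp only [Finset.coe_filter, Set.mem_setOf_eq, Finset.mem_coe, mem_psupp]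
      exact fun h => h hfv

lemma not_mem_DSet_ne {v : V} (hv : v ∉ DSet G) {f : V → V} (hf : IsMaxPairing G f) :
    f v ≠ v := by
  intro h
  exact hv ((mem_DSet_iff G v).2 ⟨f, hf, h⟩)

lemma PM_iff : (∃ M : G.Subgraph, M.IsPerfectMatching) ↔
    2 * matchingNumber G = Fintype.card V := by
  constructor
  · rintro ⟨M, hM, hsp⟩
    have h1 : M.verts = Set.univ := hsp.verts_eq_univ
    have h2 : M.verts.ncard = Fintype.card V := by
      rw [h1, Set.ncard_univ, Nat.card_eq_fintype_card]
    have h3 : 2 * M.edgeSet.ncard = Fintype.card V := by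
      rw [← verts_ncard_eq hM, h2]
    have h4 : Fintype.card V ≤ 2 * matchingNumber G := by
      rw [← h3]; exact Nat.mul_le_mul_left 2 (matching_le_nu G M hM)
    obtain ⟨f, hf, hcard⟩ := exists_maxPairing G
    have h5 : 2 * matchingNumber G ≤ Fintype.card V := by
      rw [← hcard]
      exact le_trans (Finset.card_le_univ _) (le_of_eq (Finset.card_univ))
    omega
  · intro h
    obtain ⟨f, hf, hcard⟩ := exists_maxPairing G
    have huniv : psupp f = Finset.univ := by
      apply Finset.eq_univ_of_card
      rw [hcard, h]
    refine ⟨sgOf f hf, sgOf_matching f hf, ?_⟩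
    intro v
    rw [sgOf_verts f hf, huniv]
    simp

/-- a "good" permutation: moves only along edges; corresponds to a union of
disjoint edges and cycles of `G` -/
def GoodPerm (σ : Equiv.Perm V) : Prop := ∀ i, σ i ≠ i → G.Adj (σ i) i

/-- the maximum number of vertices covered by a disjoint union of edges and cycles -/
noncomputable def sVal : ℕ :=
  sSup {k | ∃ σ : Equiv.Perm V, GoodPerm G σ ∧ σ.support.card = k}

lemma bddAbove_sSet : BddAbove {k | ∃ σ : Equiv.Perm V, GoodPerm G σ ∧ σ.support.card = k} := by
  refine ⟨Fintype.card V, ?_⟩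
  rintro k ⟨σ, _, rfl⟩
  exact Finset.card_le_univ _

lemma zero_mem_sSet : 0 ∈ {k | ∃ σ : Equiv.Perm V, GoodPerm G σ ∧ σ.support.card = k} := by
  refine ⟨1, fun i hi => absurd rfl hi, by simp⟩

lemma exists_sVal_perm : ∃ σ : Equiv.Perm V, GoodPerm G σ ∧ σ.support.card = sVal G :=
  Nat.sSup_mem ⟨0, zero_mem_sSet G⟩ (bddAbove_sSet G)

lemma good_le_sVal (σ : Equiv.Perm V) (hσ : GoodPerm G σ) : σ.support.card ≤ sVal G :=
  le_csSup (bddAbove_sSet G) ⟨σ, hσ, rfl⟩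

lemma sVal_le_card : sVal G ≤ Fintype.card V := by
  obtain ⟨σ, hσ, hcard⟩ := exists_sVal_perm G
  rw [← hcard]; exact Finset.card_le_univ _

lemma permPoly_eq : permPoly G = ∑ σ : Equiv.Perm V,
    if GoodPerm G σ then
      (C ((-1 : ℤ) ^ σ.support.card) * X ^ (Fintype.card V - σ.support.card) : ℤ[X])
    else 0 := by
  rw [permPoly, Matrix.permanent]
  apply Finset.sum_congr rfl
  intro σ _
  have hentry : ∀ i : V,
      ((X : ℤ[X]) • (1 : Matrix V V ℤ[X]) -
        Matrix.of fun i j => if G.Adj i j then (1 : ℤ[X]) else 0) (σ i) i =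
      (if σ i = i then (X : ℤ[X]) else 0) - (if G.Adj (σ i) i then 1 else 0) := by
    intro i
    simp [Matrix.sub_apply, Matrix.smul_apply, Matrix.one_apply, Matrix.of_apply]
  simp only [hentry]
  rw [← Finset.prod_mul_prod_compl σ.support]
  have h1 : ∀ i ∈ σ.supportᶜ,
      ((if σ i = i then (X : ℤ[X]) else 0) - (if G.Adj (σ i) i then 1 else 0)) = X := by
    intro i hi
    rw [Finset.mem_compl, Equiv.Perm.notMem_support] at hi
    rw [if_pos hi, hi, if_neg (G.irrefl), sub_zero]
  rw [Finset.prod_congr rfl h1, Finset.prod_const]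
  have hcompl : σ.supportᶜ.card = Fintype.card V - σ.support.card := by
    rw [Finset.card_compl]
  by_cases hg : GoodPerm G σ
  · rw [if_pos hg]
    have h2 : ∀ i ∈ σ.support,
        ((if σ i = i then (X : ℤ[X]) else 0) - (if G.Adj (σ i) i then 1 else 0)) = -1 := by
      intro i hi
      rw [Equiv.Perm.mem_support] at hi
      rw [if_neg hi, if_pos (hg i hi), zero_sub]
    rw [Finset.prod_congr rfl h2, Finset.prod_const, hcompl, map_pow, map_neg, map_one]
  · rw [if_neg hg]
    rw [GoodPerm] at hg
    push_neg at hg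
    obtain ⟨i, hi1, hi2⟩ := hg
    rw [Finset.prod_eq_zero (Equiv.Perm.mem_support.2 hi1)
      (by rw [if_neg hi1, if_neg hi2, sub_zero]), zero_mul]

lemma permPoly_coeff (m : ℕ) : (permPoly G).coeff m =
    ∑ σ : Equiv.Perm V,
      if GoodPerm G σ ∧ Fintype.card V - σ.support.card = m then
        ((-1 : ℤ) ^ σ.support.card) else 0 := by
  rw [permPoly_eq, Polynomial.finset_sum_coeff]
  apply Finset.sum_congr rfl
  intro σ _
  by_cases hg : GoodPerm G σ
  · rw [if_pos hg, Polynomial.coeff_C_mul, Polynomial.coeff_X_pow]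
    by_cases hm : m = Fintype.card V - σ.support.card
    · rw [if_pos hm, if_pos ⟨hg, hm.symm⟩, mul_one]
    · rw [if_neg hm, if_neg (fun h => hm h.2.symm), mul_zero]
  · rw [if_neg hg, if_neg (fun h => hg h.1), Polynomial.coeff_zero]

lemma permPoly_coeff_low (m : ℕ) (hm : m < Fintype.card V - sVal G) :
    (permPoly G).coeff m = 0 := by
  rw [permPoly_coeff]
  apply Finset.sum_eq_zero
  intro σ _
  rw [if_neg]
  rintro ⟨hg, hcard⟩
  have h1 := good_le_sVal G σ hg
  have h2 := sVal_le_card G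
  omega

lemma permPoly_coeff_sVal : (permPoly G).coeff (Fintype.card V - sVal G) ≠ 0 := by
  rw [permPoly_coeff]
  have hs := sVal_le_card G
  have hkey : ∀ σ : Equiv.Perm V,
      (if GoodPerm G σ ∧ Fintype.card V - σ.support.card = Fintype.card V - sVal G then
        ((-1 : ℤ) ^ σ.support.card) else 0) =
      (if GoodPerm G σ ∧ σ.support.card = sVal G then ((-1 : ℤ) ^ sVal G) else 0) := by
    intro σ
    by_cases hg : GoodPerm G σ
    · have hle := good_le_sVal G σ hg
      have hle2 : σ.support.card ≤ Fintype.card V := Finset.card_le_univ _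
      by_cases he : σ.support.card = sVal G
      · rw [if_pos ⟨hg, by omega⟩, if_pos ⟨hg, he⟩, he]
      · rw [if_neg (fun h => he (by omega)), if_neg (fun h => he h.2)]
    · rw [if_neg (fun h => hg h.1), if_neg (fun h => hg h.1)]
  rw [Finset.sum_congr rfl (fun σ _ => hkey σ), Finset.sum_ite, Finset.sum_const,
    Finset.sum_const_zero, add_zero, nsmul_eq_mul]
  apply mul_ne_zero
  · obtain ⟨σ, hσ, hcard⟩ := exists_sVal_perm G
    have : σ ∈ Finset.univ.filter
        (fun σ : Equiv.Perm V => GoodPerm G σ ∧ σ.support.card = sVal G) := by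
      simp [hσ, hcard]
    intro hc
    rw [Nat.cast_eq_zero, Finset.card_eq_zero] at hc
    rw [hc] at this
    exact absurd this (Finset.notMem_empty σ)
  · exact pow_ne_zero _ (by norm_num)

lemma perNullity_eq : perNullity G = Fintype.card V - sVal G := by
  rw [perNullity, Polynomial.rootMultiplicity_eq_natTrailingDegree']
  have hne : permPoly G ≠ 0 := by
    intro h
    exact permPoly_coeff_sVal G (by rw [h, Polynomial.coeff_zero])
  apply le_antisymm
  · exact Polynomial.natTrailingDegree_le_of_ne_zero (permPoly_coeff_sVal G)
  · exact Polynomial.le_natTrailingDegree hne (fun m hm => permPoly_coeff_low G m hm)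

lemma two_nu_le_sVal : 2 * matchingNumber G ≤ sVal G := by
  obtain ⟨f, hf, hcard⟩ := exists_maxPairing G
  have hperm : ∀ v, f (f v) = v := hf.1
  let F : Equiv.Perm V := Function.Involutive.toPerm f hf.1
  have hF : ∀ v, F v = f v := fun v => rfl
  have hsupp : F.support = psupp f := by
    ext v; simp [Equiv.Perm.mem_support, hF, mem_psupp]
  have hgood : GoodPerm G F := by
    intro i hi
    rw [hF] at hi ⊢
    exact (hf.2 i hi).symm
  calc 2 * matchingNumber G = (psupp f).card := hcard.symm
    _ = F.support.card := by rw [hsupp]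
    _ ≤ sVal G := good_le_sVal G F hgood

variable {G}

/-- Alternating sequence structure: starting from `y` (covered by `f`), alternately follow
`f`-edges and `h`-edges.  `HSeq f h y v S` means the sequence has so far visited exactly the
vertices of `S`, the current endpoint is `v`, which was reached by an `f`-edge. -/
inductive HSeq (f h : V → V) (y : V) : V → Finset V → Prop
  | base : f y ≠ y → HSeq f h y (f y) {y, f y}
  | step {v : V} {S : Finset V} : HSeq f h y v S → h v ≠ v → h v ∉ S →
      f (h v) ≠ h v → f (h v) ∉ S → HSeq f h y (f (h v)) (S ∪ {h v, f (h v)})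

/-- invariants of alternating sequences -/
def HInv (f h : V → V) (y v : V) (S : Finset V) : Prop :=
  y ∈ S ∧ v ∈ S ∧ v ≠ y ∧ (∀ u ∈ S, f u ∈ S ∧ f u ≠ u) ∧
    (∀ u ∈ S, u ≠ y → u ≠ v → h u ∈ S ∧ h u ≠ y ∧ h u ≠ v ∧ h u ≠ u)

lemma HSeq.hinv {f h : V → V} {y v : V} {S : Finset V}
    (hf : Function.Involutive f) (hh : Function.Involutive h) (hy : h y = y)
    (hs : HSeq f h y v S) : HInv f h y v S := by
  induction hs with
  | base hfy =>
    refine ⟨by simp, by simp, hfy, ?_, ?_⟩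
    · intro u hu
      rcases Finset.mem_insert.1 hu with rfl | hu
      · exact ⟨by simp, hfy⟩
      · rw [Finset.mem_singleton] at hu
        subst hu
        exact ⟨by simp [hf y], fun hc => hfy (by conv_lhs => rw [← hc, hf y])⟩
    · intro u hu hu1 hu2
      rcases Finset.mem_insert.1 hu with rfl | hu
      · exact absurd rfl hu1
      · rw [Finset.mem_singleton] at hu
        exact absurd hu hu2
  | step hs hv1 hv2 hv3 hv4 ih =>
    rename_i v S
    obtain ⟨iy, iv, ivy, ifc, ihc⟩ := ih
    have hwS : h v ∉ S := hv2
    have hwv' : h v ≠ f (h v) := fun hc => hv3 hc.symm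
    constructor
    · exact Finset.mem_union_left _ iy
    refine ⟨?_, ?_, ?_, ?_⟩
    · exact Finset.mem_union_right _ (by simp)
    · intro hc
      rw [hc] at hv4; exact hv4 iy
    · intro u hu
      rcases Finset.mem_union.1 hu with hu | hu
      · obtain ⟨h1, h2⟩ := ifc u hu
        exact ⟨Finset.mem_union_left _ h1, h2⟩
      · rcases Finset.mem_insert.1 hu with rfl | hu
        · exact ⟨Finset.mem_union_right _ (by simp), hv3⟩
        · rw [Finset.mem_singleton] at hu
          subst hu
          rw [hf (h v)]
          exact ⟨Finset.mem_union_right _ (by simp), hwv'⟩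
    · intro u hu hu1 hu2
      rcases Finset.mem_union.1 hu with hu | hu
      · by_cases huv : u = v
        · subst huv
          exact ⟨Finset.mem_union_right _ (by simp),
            fun hc => hv2 (hc.symm ▸ iy), hwv', hv1⟩
        · obtain ⟨h1, h2, h3, h4⟩ := ihc u hu hu1 huv
          refine ⟨Finset.mem_union_left _ h1, h2, ?_, h4⟩
          intro hc; rw [hc] at h1; exact hv4 h1
      · rcases Finset.mem_insert.1 hu with rfl | hu
        · rw [hh v]  -- u = h v, h (h v) = v
          exact ⟨Finset.mem_union_left _ iv, ivy,
            fun hc => hv4 (hc ▸ iv), fun hc => hv2 (hc ▸ iv)⟩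
        · rw [Finset.mem_singleton] at hu
          exact absurd hu hu2

lemma hseq_reach {f h : V → V} {y : V} (hfp : IsPairing G f) (hhp : IsPairing G h)
    (hhmax : (psupp h).card = 2 * matchingNumber G) (hy : h y = y) (hfy : f y ≠ y) :
    ∃ v S, HSeq f h y v S ∧ h v ≠ v ∧ h v ∉ S ∧ f (h v) = h v := by
  classical
  suffices H : ∀ n (S : Finset V) (v : V), (Finset.univ \ S).card ≤ n → HSeq f h y v S →
      ∃ v S, HSeq f h y v S ∧ h v ≠ v ∧ h v ∉ S ∧ f (h v) = h v by
    exact H _ _ _ le_rfl (HSeq.base hfy)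
  intro n
  induction n using Nat.strong_induction_on with
  | _ n IH =>
  intro S v hcard hs
  obtain ⟨iy, iv, ivy, ifc, ihc⟩ := hs.hinv hfp.1 hhp.1 hy
  by_cases hvv : h v = v
  · -- T1 : flipping along the sequence augments h, contradicting maximality
    exfalso
    have hSclosed : ∀ z, z ∉ S → h z ∉ S := by
      intro z hz hc
      by_cases hzy : h z = y
      · exact hz (by rw [← hhp.1 z, hzy, hy]; exact iy)
      by_cases hzv : h z = v
      · exact hz (by rw [← hhp.1 z, hzv, hvv]; exact iv)
      · obtain ⟨h1, _, _, _⟩ := ihc (h z) hc hzy hzv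
        rw [hhp.1 z] at h1
        exact hz h1
    set h' : V → V := fun z => if z ∈ S then f z else h z with hh'
    have hp' : IsPairing G h' := by
      constructor
      · intro z
        by_cases hz : z ∈ S
        · have h1 : f z ∈ S := (ifc z hz).1
          simp only [hh', if_pos hz, if_pos h1]
          exact hfp.1 z
        · have h1 : h z ∉ S := hSclosed z hz
          simp only [hh', if_neg hz, if_neg h1]
          exact hhp.1 z
      · intro z hz
        by_cases hzS : z ∈ S
        · simp only [hh', if_pos hzS] at hz ⊢
          exact hfp.2 z hz
        · simp only [hh', if_neg hzS] at hz ⊢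
          exact hhp.2 z hz
    have hsupp : psupp h' = psupp h ∪ S := by
      ext z
      simp only [mem_psupp, Finset.mem_union]
      by_cases hz : z ∈ S
      · simp only [hh', if_pos hz]
        exact ⟨fun _ => Or.inr hz, fun _ => (ifc z hz).2⟩
      · simp only [hh', if_neg hz]
        exact ⟨fun hne => Or.inl hne, fun hne => hne.resolve_right hz⟩
    have hdiff : S \ psupp h = {y, v} := by
      ext u
      simp only [Finset.mem_sdiff, mem_psupp, not_not, Finset.mem_insert,
        Finset.mem_singleton]
      constructor
      · rintro ⟨huS, huh⟩
        by_contra hc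
        push_neg at hc
        exact (ihc u huS hc.1 hc.2).2.2.2 huh
      · rintro (rfl | rfl)
        · exact ⟨iy, hy⟩
        · exact ⟨iv, hvv⟩
    have hcard' : (psupp h').card = (psupp h).card + 2 := by
      rw [hsupp, ← Finset.union_sdiff_self_eq_union,
        Finset.card_union_of_disjoint Finset.disjoint_sdiff, hdiff,
        Finset.card_insert_of_notMem (by simp [ivy.symm]), Finset.card_singleton]
    have := pairing_card_le G h' hp'
    omega
  · have hvS : h v ∉ S := by
      intro hc
      by_cases hzy : h v = y
      · exact ivy (by rw [← hhp.1 v, hzy, hy])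
      · obtain ⟨_, _, hne, _⟩ := ihc (h v) hc hzy hvv
        exact hne (hhp.1 v)
    by_cases hfw : f (h v) = h v
    · exact ⟨v, S, hs, hvv, hvS, hfw⟩
    · have hfwS : f (h v) ∉ S := by
        intro hc
        have := (ifc (f (h v)) hc).1
        rw [hfp.1 (h v)] at this
        exact hvS this
      have hs' := hs.step hvv hvS hfw hfwS
      have hlt : (Finset.univ \ (S ∪ {h v, f (h v)})).card < (Finset.univ \ S).card := by
        apply Finset.card_lt_card
        rw [Finset.ssubset_iff_of_subset
          (Finset.sdiff_subset_sdiff le_rfl Finset.subset_union_left)]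
        exact ⟨h v, by simp [hvS], by simp⟩
      exact IH _ (lt_of_lt_of_le hlt hcard) _ _ le_rfl hs'

lemma hseq_flip {f h : V → V} {y : V} (hfp : IsPairing G f) (hhp : IsPairing G h)
    (hy : h y = y) (hfy : f y ≠ y) {v : V} {S : Finset V}
    (hs : HSeq f h y v S) (hwv : h v ≠ v) (hw : h v ∉ S) (hfw : f (h v) = h v) :
    ∃ g, IsPairing G g ∧ g y = y ∧ (∀ u, u ∉ S → u ≠ h v → g u = f u) ∧
      psupp g = (psupp f ∪ {h v}) \ {y} := by
  classical
  obtain ⟨iy, iv, ivy, ifc, ihc⟩ := hs.hinv hfp.1 hhp.1 hy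
  set w := h v with hwdef
  set g : V → V := fun z => if z = y then y else if z ∈ S ∪ {w} then h z else f z with hg
  have hyS : y ∈ S := iy
  have hwy : w ≠ y := fun hc => hw (by rw [hc]; exact iy)
  -- membership facts
  have hmemT : ∀ z, z ∈ S ∪ ({w} : Finset V) → z ≠ y → h z ∈ S ∪ ({w} : Finset V) ∧ h z ≠ y ∧ h z ≠ z := by
    intro z hz hzy
    rcases Finset.mem_union.1 hz with hzS | hzw
    · by_cases hzv : z = v
      · subst hzv
        exact ⟨Finset.mem_union_right _ (by simp [hwdef]), fun hc => hw (by rw [hwdef, hc]; exact iy), hwv⟩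
      · obtain ⟨h1, h2, _, h4⟩ := ihc z hzS hzy hzv
        exact ⟨Finset.mem_union_left _ h1, h2, h4⟩
    · rw [Finset.mem_singleton] at hzw
      subst hzw
      rw [hwdef, hhp.1 v]
      exact ⟨Finset.mem_union_left _ iv, ivy, fun hc => hw (by rw [hwdef, ← hc]; exact iv)⟩
  have hoffT : ∀ z, z ∉ S ∪ ({w} : Finset V) → z ≠ y → f z ∉ S ∪ ({w} : Finset V) ∧ f z ≠ y := by
    intro z hz hzy
    constructor
    · intro hc
      rcases Finset.mem_union.1 hc with hcS | hcw
      · have := (ifc (f z) hcS).1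
        rw [hfp.1 z] at this
        exact hz (Finset.mem_union_left _ this)
      · rw [Finset.mem_singleton] at hcw
        have : z = f w := by rw [← hcw, hfp.1 z]
        rw [hfw] at this
        exact hz (Finset.mem_union_right _ (by simp [this]))
    · intro hc
      have : z = f y := by rw [← hc, hfp.1 z]
      have h2 : f y ∈ S := (ifc y iy).1
      exact hz (Finset.mem_union_left _ (this ▸ h2))
  refine ⟨g, ⟨?_, ?_⟩, by simp [hg], ?_, ?_⟩
  · -- involutive
    intro z
    by_cases hzy : z = y
    · subst hzy; simp [hg]
    by_cases hzT : z ∈ S ∪ ({w} : Finset V)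
    · obtain ⟨h1, h2, _⟩ := hmemT z hzT hzy
      simp only [hg, if_neg hzy, if_pos hzT, if_neg h2, if_pos h1]
      exact hhp.1 z
    · obtain ⟨h1, h2⟩ := hoffT z hzT hzy
      simp only [hg, if_neg hzy, if_neg hzT, if_neg h2, if_neg h1]
      exact hfp.1 z
  · -- adjacency
    intro z hz
    by_cases hzy : z = y
    · subst hzy; simp [hg] at hz
    by_cases hzT : z ∈ S ∪ ({w} : Finset V)
    · simp only [hg, if_neg hzy, if_pos hzT] at hz ⊢
      exact hhp.2 z hz
    · simp only [hg, if_neg hzy, if_neg hzT] at hz ⊢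
      exact hfp.2 z hz
  · -- g = f off S ∪ {w}
    intro u huS huw
    have huT : u ∉ S ∪ ({w} : Finset V) := by
      simp only [Finset.mem_union, Finset.mem_singleton]
      rintro (hc | hc)
      · exact huS hc
      · exact huw hc
    have huy : u ≠ y := fun hc => huS (hc ▸ iy)
    simp only [hg, if_neg huy, if_neg huT]
  · -- support
    ext z
    simp only [mem_psupp, Finset.mem_sdiff, Finset.mem_union, Finset.mem_singleton]
    by_cases hzy : z = y
    · subst hzy
      simp [hg]
    by_cases hzT : z ∈ S ∪ ({w} : Finset V)
    · simp only [hg, if_neg hzy, if_pos hzT]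
      obtain ⟨_, _, h3⟩ := hmemT z hzT hzy
      constructor
      · intro _
        refine ⟨?_, hzy⟩
        rcases Finset.mem_union.1 hzT with hzS | hzw
        · exact Or.inl (ifc z hzS).2
        · rw [Finset.mem_singleton] at hzw
          exact Or.inr hzw
      · intro _
        exact h3
    · simp only [hg, if_neg hzy, if_neg hzT]
      have hzw : z ≠ w := by
        intro hc
        exact hzT (Finset.mem_union_right _ (by simp [hc]))
      constructor
      · intro hne
        exact ⟨Or.inl hne, hzy⟩
      · rintro ⟨hne | hne, _⟩
        · exact hne
        · exact absurd hne hzw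

lemma flip_core {f h : V → V} (hfp : IsPairing G f) (hhp : IsPairing G h)
    {y v : V} {S : Finset V}
    (iy : y ∈ S) (iv : v ∈ S) (ivy : v ≠ y)
    (ifc : ∀ u ∈ S, f u ∈ S ∧ f u ≠ u)
    (ihc : ∀ u ∈ S, u ≠ y → u ≠ v → h u ∈ S ∧ h u ≠ y ∧ h u ≠ v ∧ h u ≠ u)
    (hwv : h v ≠ v) (hw : h v ∉ S) (hfw : f (h v) = h v) :
    ∃ g, IsPairing G g ∧ g y = y ∧ (∀ u, u ∉ S → u ≠ h v → g u = f u) ∧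
      psupp g = (psupp f ∪ {h v}) \ {y} := by
  classical
  set w := h v with hwdef
  set g : V → V := fun z => if z = y then y else if z ∈ S ∪ {w} then h z else f z with hg
  have hyS : y ∈ S := iy
  have hwy : w ≠ y := fun hc => hw (by rw [hc]; exact iy)
  -- membership facts
  have hmemT : ∀ z, z ∈ S ∪ ({w} : Finset V) → z ≠ y → h z ∈ S ∪ ({w} : Finset V) ∧ h z ≠ y ∧ h z ≠ z := by
    intro z hz hzy
    rcases Finset.mem_union.1 hz with hzS | hzw
    · by_cases hzv : z = v
      · subst hzv
        exact ⟨Finset.mem_union_right _ (by simp [hwdef]), fun hc => hw (by rw [hwdef, hc]; exact iy), hwv⟩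
      · obtain ⟨h1, h2, _, h4⟩ := ihc z hzS hzy hzv
        exact ⟨Finset.mem_union_left _ h1, h2, h4⟩
    · rw [Finset.mem_singleton] at hzw
      subst hzw
      rw [hwdef, hhp.1 v]
      exact ⟨Finset.mem_union_left _ iv, ivy, fun hc => hw (by rw [hwdef, ← hc]; exact iv)⟩
  have hoffT : ∀ z, z ∉ S ∪ ({w} : Finset V) → z ≠ y → f z ∉ S ∪ ({w} : Finset V) ∧ f z ≠ y := by
    intro z hz hzy
    constructor
    · intro hc
      rcases Finset.mem_union.1 hc with hcS | hcw
      · have := (ifc (f z) hcS).1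
        rw [hfp.1 z] at this
        exact hz (Finset.mem_union_left _ this)
      · rw [Finset.mem_singleton] at hcw
        have : z = f w := by rw [← hcw, hfp.1 z]
        rw [hfw] at this
        exact hz (Finset.mem_union_right _ (by simp [this]))
    · intro hc
      have : z = f y := by rw [← hc, hfp.1 z]
      have h2 : f y ∈ S := (ifc y iy).1
      exact hz (Finset.mem_union_left _ (this ▸ h2))
  refine ⟨g, ⟨?_, ?_⟩, by simp [hg], ?_, ?_⟩
  · -- involutive
    intro z
    by_cases hzy : z = y
    · subst hzy; simp [hg]
    by_cases hzT : z ∈ S ∪ ({w} : Finset V)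
    · obtain ⟨h1, h2, _⟩ := hmemT z hzT hzy
      simp only [hg, if_neg hzy, if_pos hzT, if_neg h2, if_pos h1]
      exact hhp.1 z
    · obtain ⟨h1, h2⟩ := hoffT z hzT hzy
      simp only [hg, if_neg hzy, if_neg hzT, if_neg h2, if_neg h1]
      exact hfp.1 z
  · -- adjacency
    intro z hz
    by_cases hzy : z = y
    · subst hzy; simp [hg] at hz
    by_cases hzT : z ∈ S ∪ ({w} : Finset V)
    · simp only [hg, if_neg hzy, if_pos hzT] at hz ⊢
      exact hhp.2 z hz
    · simp only [hg, if_neg hzy, if_neg hzT] at hz ⊢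
      exact hfp.2 z hz
  · -- g = f off S ∪ {w}
    intro u huS huw
    have huT : u ∉ S ∪ ({w} : Finset V) := by
      simp only [Finset.mem_union, Finset.mem_singleton]
      rintro (hc | hc)
      · exact huS hc
      · exact huw hc
    have huy : u ≠ y := fun hc => huS (hc ▸ iy)
    simp only [hg, if_neg huy, if_neg huT]
  · -- support
    ext z
    simp only [mem_psupp, Finset.mem_sdiff, Finset.mem_union, Finset.mem_singleton]
    by_cases hzy : z = y
    · subst hzy
      simp [hg]
    by_cases hzT : z ∈ S ∪ ({w} : Finset V)
    · simp only [hg, if_neg hzy, if_pos hzT]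
      obtain ⟨_, _, h3⟩ := hmemT z hzT hzy
      constructor
      · intro _
        refine ⟨?_, hzy⟩
        rcases Finset.mem_union.1 hzT with hzS | hzw
        · exact Or.inl (ifc z hzS).2
        · rw [Finset.mem_singleton] at hzw
          exact Or.inr hzw
      · intro _
        exact h3
    · simp only [hg, if_neg hzy, if_neg hzT]
      have hzw : z ≠ w := by
        intro hc
        exact hzT (Finset.mem_union_right _ (by simp [hc]))
      constructor
      · intro hne
        exact ⟨Or.inl hne, hzy⟩
      · rintro ⟨hne | hne, _⟩
        · exact hne
        · exact absurd hne hzw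

lemma hseq_sufft {f h : V → V} {y : V} (hf : Function.Involutive f)
    (hh : Function.Involutive h) {v : V} {S : Finset V} (hs : HSeq f h y v S) :
    ∀ b ∈ S, ∃ e T, (e = b ∨ e = f b) ∧ T ⊆ S ∧ e ∈ T ∧ v ∈ T ∧ e ≠ v ∧
      (∀ z ∈ T, f z ∈ T ∧ f z ≠ z) ∧
      (∀ z ∈ T, z ≠ e → z ≠ v → h z ∈ T ∧ h z ≠ e ∧ h z ≠ z) := by
  induction hs with
  | base hfy =>
    intro b hb
    have hbase : ∃ (e : V) (T : Finset V), (e = y ∨ e = f y) ∧ T ⊆ {y, f y} ∧ e ∈ T ∧ f y ∈ T ∧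
        e ≠ f y ∧ (∀ z ∈ T, f z ∈ T ∧ f z ≠ z) ∧
        (∀ z ∈ T, z ≠ e → z ≠ f y → h z ∈ T ∧ h z ≠ e ∧ h z ≠ z) := by
      refine ⟨y, {y, f y}, Or.inl rfl, le_refl _, by simp, by simp, fun hc => hfy hc.symm,
        ?_, ?_⟩
      · intro z hz
        rcases Finset.mem_insert.1 hz with rfl | hz
        · exact ⟨by simp, hfy⟩
        · rw [Finset.mem_singleton] at hz
          subst hz
          rw [hf y]
          exact ⟨by simp, fun hc => hfy (by conv_lhs => rw [hc, hf y])⟩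
      · intro z hz hz1 hz2
        rcases Finset.mem_insert.1 hz with rfl | hz
        · exact absurd rfl hz1
        · rw [Finset.mem_singleton] at hz
          exact absurd hz hz2
    obtain ⟨e, T, heor, hrest⟩ := hbase
    rcases Finset.mem_insert.1 hb with rfl | hb
    · exact ⟨e, T, heor, hrest⟩
    · rw [Finset.mem_singleton] at hb
      subst hb
      refine ⟨e, T, ?_, hrest⟩
      rcases heor with he | he
      · exact Or.inr (by rw [hf y]; exact he)
      · exact Or.inl he
  | step hs hv1 hv2 hv3 hv4 ih =>
    rename_i v S
    intro b hb
    rcases Finset.mem_union.1 hb with hbS | hbnew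
    · obtain ⟨e, T, heor, hTS, ieT, ivT, hev, ifcT, ihcT⟩ := ih b hbS
      have hvS : v ∈ S := hTS ivT
      have heS : e ∈ S := hTS ieT
      refine ⟨e, T ∪ {h v, f (h v)}, heor, Finset.union_subset_union hTS le_rfl,
        Finset.mem_union_left _ ieT, Finset.mem_union_right _ (by simp), ?_, ?_, ?_⟩
      · intro hc; rw [hc] at heS; exact hv4 heS
      · intro z hz
        rcases Finset.mem_union.1 hz with hzT | hznew
        · obtain ⟨h1, h2⟩ := ifcT z hzT
          exact ⟨Finset.mem_union_left _ h1, h2⟩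
        · rcases Finset.mem_insert.1 hznew with rfl | hznew
          · exact ⟨Finset.mem_union_right _ (by simp), hv3⟩
          · rw [Finset.mem_singleton] at hznew
            subst hznew
            rw [hf (h v)]
            exact ⟨Finset.mem_union_right _ (by simp), fun hc => hv3 hc.symm⟩
      · intro z hz hz1 hz2
        rcases Finset.mem_union.1 hz with hzT | hznew
        · by_cases hzv : z = v
          · subst hzv
            refine ⟨Finset.mem_union_right _ (by simp), ?_, hv1⟩
            intro hc; rw [← hc] at heS; exact hv2 heS
          · obtain ⟨h1, h2, h3⟩ := ihcT z hzT hz1 hzv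
            exact ⟨Finset.mem_union_left _ h1, h2, h3⟩
        · rcases Finset.mem_insert.1 hznew with rfl | hznew
          · rw [hh v]
            exact ⟨Finset.mem_union_left _ ivT, Ne.symm hev,
              fun hc => hv2 (by rw [← hc]; exact hvS)⟩
          · rw [Finset.mem_singleton] at hznew
            exact absurd hznew hz2
    · have hcore : ∃ (e : V) (T : Finset V), (e = h v ∨ e = f (h v)) ∧
          T ⊆ S ∪ {h v, f (h v)} ∧ e ∈ T ∧ f (h v) ∈ T ∧ e ≠ f (h v) ∧
          (∀ z ∈ T, f z ∈ T ∧ f z ≠ z) ∧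
          (∀ z ∈ T, z ≠ e → z ≠ f (h v) → h z ∈ T ∧ h z ≠ e ∧ h z ≠ z) := by
        refine ⟨h v, {h v, f (h v)}, Or.inl rfl, ?_, by simp, by simp,
          fun hc => hv3 hc.symm, ?_, ?_⟩
        · intro z hz; exact Finset.mem_union_right _ hz
        · intro z hz
          rcases Finset.mem_insert.1 hz with rfl | hz
          · exact ⟨by simp, hv3⟩
          · rw [Finset.mem_singleton] at hz
            subst hz
            rw [hf (h v)]
            exact ⟨by simp, fun hc => hv3 hc.symm⟩
        · intro z hz hz1 hz2
          rcases Finset.mem_insert.1 hz with rfl | hz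
          · exact absurd rfl hz1
          · rw [Finset.mem_singleton] at hz
            exact absurd hz hz2
      obtain ⟨e, T, heor, hrest⟩ := hcore
      rcases Finset.mem_insert.1 hbnew with rfl | hbnew
      · exact ⟨e, T, heor, hrest⟩
      · rw [Finset.mem_singleton] at hbnew
        subst hbnew
        refine ⟨e, T, ?_, hrest⟩
        rcases heor with he | he
        · exact Or.inr (by rw [hf (h v)]; exact he)
        · exact Or.inl he

lemma card_flip_psupp {f : V → V} {w e : V} (hw : f w = w) (he : f e ≠ e) :
    ((psupp f ∪ {w}) \ {e}).card = (psupp f).card := by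
  have hwmem : w ∉ psupp f := by simp [mem_psupp, hw]
  have hemem : e ∈ psupp f := by simp [mem_psupp, he]
  have hsub : {e} ⊆ psupp f ∪ {w} := by
    simp only [Finset.singleton_subset_iff]
    exact Finset.mem_union_left _ hemem
  rw [Finset.card_sdiff_of_subset hsub,
    Finset.card_union_of_disjoint (by simp [hwmem]), Finset.card_singleton,
    Finset.card_singleton]
  have : 1 ≤ (psupp f).card := Finset.card_pos.2 ⟨e, hemem⟩
  omega

lemma no_two_exposed {f : V → V} (hf : IsMaxPairing G f) {a b : V} (ha : f a = a)
    (hb : f b = b) (hadj : G.Adj a b) : False := by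
  classical
  have hab : a ≠ b := hadj.ne
  set g : V → V := fun z => if z = a then b else if z = b then a else f z with hg
  have hinv : Function.Involutive f := hf.1.1
  have hgp : IsPairing G g := by
    constructor
    · intro z
      by_cases hza : z = a
      · subst hza; simp [hg, hab, hab.symm]
      by_cases hzb : z = b
      · subst hzb; simp [hg, hab, hab.symm]
      · have h1 : f z ≠ a := fun hc => hza (by rw [← hinv z, hc, ha])
        have h2 : f z ≠ b := fun hc => hzb (by rw [← hinv z, hc, hb])
        simp [hg, hza, hzb, h1, h2, hinv z]
    · intro z hz
      by_cases hza : z = a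
      · subst hza
        simpa [hg] using hadj
      by_cases hzb : z = b
      · subst hzb
        simpa [hg, hab.symm] using hadj.symm
      · simp only [hg, if_neg hza, if_neg hzb] at hz ⊢
        exact hf.1.2 z hz
  have hsupp : psupp g = psupp f ∪ {a, b} := by
    ext z
    simp only [mem_psupp, Finset.mem_union, Finset.mem_insert, Finset.mem_singleton]
    by_cases hza : z = a
    · subst hza; simp [hg, hab, hab.symm, ha]
    by_cases hzb : z = b
    · subst hzb; simp [hg, hab, hab.symm, hb]
    · simp only [hg, if_neg hza, if_neg hzb]
      constructor
      · exact fun hne => Or.inl hne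
      · rintro (hne | hne | hne)
        · exact hne
        · exact absurd hne hza
        · exact absurd hne hzb
  have hcard : (psupp g).card = (psupp f).card + 2 := by
    have hna : a ∉ psupp f := by simp [mem_psupp, ha]
    have hnb : b ∉ psupp f := by simp [mem_psupp, hb]
    rw [hsupp, Finset.card_union_of_disjoint (by simp [hna, hnb]),
      Finset.card_insert_of_notMem (by simp [hab]), Finset.card_singleton]
  have hle := pairing_card_le G g hgp
  rw [hcard, hf.2] at hle
  omega

lemma rewire {g : V → V} (hgp : IsPairing G g)
    (hgmax : (psupp g).card = 2 * matchingNumber G)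
    {b u : V} (hu : g u = u) (hb : g b ≠ b) (hbu : g b ≠ u) (hadj : G.Adj b u) :
    g b ∈ DSet G := by
  classical
  have hinv : Function.Involutive g := hgp.1
  have hbune : b ≠ u := hadj.ne
  have hgbb : g (g b) = b := hinv b
  have hbgb : b ≠ g b := fun hc => hb hc.symm
  set g' : V → V := fun z => if z = b then u else if z = u then b
    else if z = g b then g b else g z with hg'
  have hugb : u ≠ g b := fun hc => hbu hc.symm
  have key : ∀ z, z ≠ b → z ≠ u → z ≠ g b → (g z ≠ b ∧ g z ≠ u ∧ g z ≠ g b) := by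
    intro z h1 h2 h3
    refine ⟨?_, ?_, ?_⟩
    · intro hc; exact h3 (by rw [← hinv z, hc])
    · intro hc; exact h2 (by rw [← hinv z, hc, hu])
    · intro hc; exact h1 (by rw [← hinv z, hc, hgbb])
  have hg'p : IsPairing G g' := by
    constructor
    · intro z
      by_cases h1 : z = b
      · subst h1; simp [hg', hbune, hbune.symm]
      by_cases h2 : z = u
      · subst h2; simp [hg', hbune, hbune.symm]
      by_cases h3 : z = g b
      · subst h3; simp [hg', hb, hbu]
      · obtain ⟨k1, k2, k3⟩ := key z h1 h2 h3
        simp [hg', h1, h2, h3, k1, k2, k3, hinv z]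
    · intro z hz
      by_cases h1 : z = b
      · subst h1; simpa [hg'] using hadj
      by_cases h2 : z = u
      · subst h2; simpa [hg', hbune.symm] using hadj.symm
      by_cases h3 : z = g b
      · subst h3
        simp [hg', hb, hbu] at hz
      · simp only [hg', if_neg h1, if_neg h2, if_neg h3] at hz ⊢
        exact hgp.2 z hz
  have hsupp : psupp g' = (psupp g ∪ {u}) \ {g b} := by
    ext z
    simp only [mem_psupp, Finset.mem_sdiff, Finset.mem_union, Finset.mem_singleton]
    by_cases h1 : z = b
    · subst h1; simp [hg', hbune, hbune.symm, hb, hbgb]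
    by_cases h2 : z = u
    · subst h2; simp [hg', hbune, hbune.symm, hugb]
    by_cases h3 : z = g b
    · subst h3; simp [hg', hb, hbu]
    · simp only [hg', if_neg h1, if_neg h2, if_neg h3]
      constructor
      · exact fun hne => ⟨Or.inl hne, h3⟩
      · rintro ⟨hne | hne, _⟩
        · exact hne
        · exact absurd hne h2
  have hcard : (psupp g').card = 2 * matchingNumber G := by
    have he : g (g b) ≠ g b := by rw [hgbb]; exact hbgb
    rw [hsupp, card_flip_psupp hu he, hgmax]
  have hfix : g' (g b) = g b := by
    simp [hg', hb, hbu]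
  exact (mem_DSet_iff G (g b)).2 ⟨g', ⟨hg'p, hcard⟩, hfix⟩

lemma sufft_expose {f h : V → V} {y : V} (hfp : IsPairing G f) (hhp : IsPairing G h)
    (hfmax : (psupp f).card = 2 * matchingNumber G)
    {v : V} {S : Finset V} (hs : HSeq f h y v S)
    (hwv : h v ≠ v) (hw : h v ∉ S) (hfw : f (h v) = h v) :
    ∀ b ∈ S, b ∈ DSet G ∨ f b ∈ DSet G := by
  intro b hb
  obtain ⟨e, T, heor, hTS, ieT, ivT, hev, ifcT, ihcT⟩ := hseq_sufft hfp.1 hhp.1 hs b hb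
  have hwT : h v ∉ T := fun hc => hw (hTS hc)
  have ihc' : ∀ u ∈ T, u ≠ e → u ≠ v → h u ∈ T ∧ h u ≠ e ∧ h u ≠ v ∧ h u ≠ u := by
    intro u hu h1 h2
    obtain ⟨a1, a2, a3⟩ := ihcT u hu h1 h2
    refine ⟨a1, a2, ?_, a3⟩
    intro hc
    have : u = h v := by rw [← hhp.1 u, hc]
    rw [this] at hu
    exact hwT hu
  obtain ⟨g, hgp, hge, _, hgsupp⟩ :=
    flip_core hfp hhp ieT ivT (Ne.symm hev) ifcT ihc' hwv hwT hfw
  have hcard : (psupp g).card = 2 * matchingNumber G := by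
    rw [hgsupp, card_flip_psupp hfw (ifcT e ieT).2, hfmax]
  have hD : e ∈ DSet G := (mem_DSet_iff G e).2 ⟨g, ⟨hgp, hcard⟩, hge⟩
  rcases heor with he | he
  · exact Or.inl (he ▸ hD)
  · exact Or.inr (he ▸ hD)

lemma lemmaB {f : V → V} (hf : IsMaxPairing G f) {b u : V} (hu : u ∈ DSet G)
    (hadj : G.Adj b u) : b ∈ DSet G ∨ f b ∈ DSet G := by
  classical
  by_cases hbD : b ∈ DSet G
  · exact Or.inl hbD
  have hfb : f b ≠ b := not_mem_DSet_ne G hbD hf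
  by_cases hfu : f u = u
  · have hbu : f b ≠ u := by
      intro hc
      have : b = f u := by rw [← hc, hf.1.1]
      rw [hfu] at this
      exact hadj.ne this
    exact Or.inr (rewire hf.1 hf.2 hfu hfb hbu hadj)
  · obtain ⟨h, hhmax, hhu⟩ := (mem_DSet_iff G u).1 hu
    obtain ⟨v, S, hs, hwv, hw, hfw⟩ := hseq_reach hf.1 hhmax.1 hhmax.2 hhu hfu
    by_cases hbS : b ∈ S
    · exact sufft_expose hf.1 hhmax.1 hf.2 hs hwv hw hfw b hbS
    · have hbw : b ≠ h v := fun hc => hfb (by rw [hc, hfw])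
      obtain ⟨_, _, _, ifc', _⟩ := hs.hinv hf.1.1 hhmax.1.1 hhu
      have hfbS : f b ∉ S := by
        intro hc
        have := (ifc' (f b) hc).1
        rw [hf.1.1 b] at this
        exact hbS this
      have hfbw : f b ≠ h v := by
        intro hc
        exact hbw (by rw [← hf.1.1 b, hc, hfw])
      obtain ⟨g, hgp, hgu, hoff, hgsupp⟩ := hseq_flip hf.1 hhmax.1 hhu hfu hs hwv hw hfw
      have hgcard : (psupp g).card = 2 * matchingNumber G := by
        rw [hgsupp, card_flip_psupp hfw hfu, hf.2]
      have hgb : g b = f b := hoff b hbS hbw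
      by_cases hfbu : f b = u
      · exact Or.inr (by rw [hfbu]; exact hu)
      · have h1 : g b ≠ b := by rw [hgb]; exact hfb
        have h2 : g b ≠ u := by rw [hgb]; exact hfbu
        have hres := rewire hgp hgcard hgu h1 h2 hadj
        rw [hgb] at hres
        exact Or.inr hres

lemma two_nu_ge_BC :
    2 * (Finset.univ.filter (· ∈ BSet G)).card + (Finset.univ.filter (· ∈ CSet G)).card
      ≤ 2 * matchingNumber G := by
  classical
  obtain ⟨f, hf⟩ := exists_maxPairing G
  have hinv : Function.Involutive f := hf.1.1
  set P := psupp f with hP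
  set Bf := Finset.univ.filter (· ∈ BSet G) with hBf
  set Cf := Finset.univ.filter (· ∈ CSet G) with hCf
  have hBmem : ∀ b, b ∈ Bf ↔ b ∈ BSet G := by
    intro b; simp [hBf]
  have hCmem : ∀ c, c ∈ Cf ↔ c ∈ CSet G := by
    intro c; simp [hCf]
  have hBnotD : ∀ b ∈ Bf, b ∉ DSet G := by
    intro b hb
    exact ((hBmem b).1 hb).1
  have hCnotD : ∀ c ∈ Cf, c ∉ DSet G := by
    intro c hc hcD
    exact ((hCmem c).1 hc) (Or.inl hcD)
  have hmap : ∀ b ∈ Bf, f b ∈ P.filter (· ∈ DSet G) := by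
    intro b hb
    obtain ⟨hbD, u, huD, hadj⟩ := (hBmem b).1 hb
    have hres := lemmaB hf huD hadj
    have hfbD : f b ∈ DSet G := hres.resolve_left hbD
    rw [Finset.mem_filter]
    refine ⟨?_, hfbD⟩
    rw [hP, mem_psupp, hinv b]
    exact Ne.symm (not_mem_DSet_ne G hbD hf)
  have hinj : Bf.card ≤ (P.filter (· ∈ DSet G)).card := by
    apply Finset.card_le_card_of_injOn f hmap
    intro a _ b _ hab
    rw [← hinv a, hab, hinv b]
  have hsplit : (P.filter (· ∈ DSet G)).card + (P.filter (fun v => ¬ v ∈ DSet G)).card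
      = P.card := by
    have hu : P.filter (· ∈ DSet G) ∪ P.filter (fun v => ¬ v ∈ DSet G) = P := by
      ext v
      simp only [Finset.mem_union, Finset.mem_filter]
      tauto
    have hd : Disjoint (P.filter (· ∈ DSet G)) (P.filter (fun v => ¬ v ∈ DSet G)) := by
      rw [Finset.disjoint_left]
      intro a ha hb
      rw [Finset.mem_filter] at ha hb
      exact hb.2 ha.2
    conv_rhs => rw [← hu]
    rw [Finset.card_union_of_disjoint hd]
  have hsub : Bf ∪ Cf ⊆ P.filter (fun v => ¬ v ∈ DSet G) := by
    intro v hv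
    rw [Finset.mem_filter]
    rcases Finset.mem_union.1 hv with hv | hv
    · exact ⟨by rw [hP, mem_psupp]; exact not_mem_DSet_ne G (hBnotD v hv) hf, hBnotD v hv⟩
    · exact ⟨by rw [hP, mem_psupp]; exact not_mem_DSet_ne G (hCnotD v hv) hf, hCnotD v hv⟩
  have hdisj : Disjoint Bf Cf := by
    rw [Finset.disjoint_left]
    intro v hvB hvC
    exact ((hCmem v).1 hvC) (Or.inr ((hBmem v).1 hvB))
  have hBC : Bf.card + Cf.card ≤ (P.filter (fun v => ¬ v ∈ DSet G)).card := by
    rw [← Finset.card_union_of_disjoint hdisj]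
    exact Finset.card_le_card hsub
  have hPcard : P.card = 2 * matchingNumber G := hf.2
  omega

lemma sVal_le_of_indep (hind : ∀ x ∈ DSet G, ∀ z ∈ DSet G, ¬ G.Adj x z) :
    sVal G ≤ 2 * matchingNumber G := by
  classical
  obtain ⟨σ, hσ, hcard⟩ := exists_sVal_perm G
  set sp := σ.support with hsp
  have hmap : ∀ v ∈ sp.filter (· ∈ DSet G), σ v ∈ sp.filter (· ∈ BSet G) := by
    intro v hv
    rw [Finset.mem_filter] at hv ⊢
    obtain ⟨hvsp, hvD⟩ := hv
    rw [hsp, Equiv.Perm.mem_support] at hvsp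
    have hadj : G.Adj (σ v) v := hσ v hvsp
    have hσD : σ v ∉ DSet G := fun hc => hind v hvD (σ v) hc hadj.symm
    constructor
    · rw [hsp, Equiv.Perm.mem_support]
      intro hc
      exact hvsp (σ.injective hc)
    · exact ⟨hσD, v, hvD, hadj⟩
  have hinj : (sp.filter (· ∈ DSet G)).card ≤ (sp.filter (· ∈ BSet G)).card :=
    Finset.card_le_card_of_injOn σ hmap (fun a _ b _ hab => σ.injective hab)
  have h1 : (sp.filter (· ∈ DSet G)).card + (sp.filter (fun v => ¬ v ∈ DSet G)).card
      = sp.card := by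
    have hu : sp.filter (· ∈ DSet G) ∪ sp.filter (fun v => ¬ v ∈ DSet G) = sp := by
      ext v
      simp only [Finset.mem_union, Finset.mem_filter]
      tauto
    have hd : Disjoint (sp.filter (· ∈ DSet G)) (sp.filter (fun v => ¬ v ∈ DSet G)) := by
      rw [Finset.disjoint_left]
      intro a ha hb
      rw [Finset.mem_filter] at ha hb
      exact hb.2 ha.2
    conv_rhs => rw [← hu]
    rw [Finset.card_union_of_disjoint hd]
  have h2 : sp.filter (fun v => ¬ v ∈ DSet G) ⊆
      (sp.filter (· ∈ BSet G)) ∪ (sp.filter (· ∈ CSet G)) := by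
    intro v hv
    rw [Finset.mem_filter] at hv
    rw [Finset.mem_union, Finset.mem_filter, Finset.mem_filter]
    by_cases hvB : v ∈ BSet G
    · exact Or.inl ⟨hv.1, hvB⟩
    · refine Or.inr ⟨hv.1, ?_⟩
      rw [CSet, Set.mem_compl_iff, Set.mem_union]
      rintro (hc | hc)
      · exact hv.2 hc
      · exact hvB hc
  have h3 := Finset.card_union_le (sp.filter (· ∈ BSet G)) (sp.filter (· ∈ CSet G))
  have h4 : (sp.filter (· ∈ BSet G)).card ≤ (Finset.univ.filter (· ∈ BSet G)).card :=
    Finset.card_le_card (Finset.filter_subset_filter _ (Finset.subset_univ sp))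
  have h5 : (sp.filter (· ∈ CSet G)).card ≤ (Finset.univ.filter (· ∈ CSet G)).card :=
    Finset.card_le_card (Finset.filter_subset_filter _ (Finset.subset_univ sp))
  have h6 := Finset.card_le_card h2
  have h7 := two_nu_ge_BC (G := G)
  omega

lemma hseq_rho {f h : V → V} {y : V} (hfp : IsPairing G f) (hhp : IsPairing G h)
    (hy : h y = y) {v : V} {S : Finset V} (hs : HSeq f h y v S) :
    ∃ ρ : Equiv.Perm V, ρ v = y ∧ (∀ u, u ∉ S → ρ u = u) ∧ (∀ u ∈ S, ρ u ∈ S) ∧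
      (∀ u ∈ S, ρ u ≠ u) ∧ (∀ u ∈ S, u ≠ v → G.Adj u (ρ u)) := by
  induction hs with
  | base hfy =>
    refine ⟨Equiv.swap y (f y), Equiv.swap_apply_right y (f y), ?_, ?_, ?_, ?_⟩
    · intro u hu
      simp only [Finset.mem_insert, Finset.mem_singleton, not_or] at hu
      exact Equiv.swap_apply_of_ne_of_ne hu.1 hu.2
    · intro u hu
      rcases Finset.mem_insert.1 hu with rfl | hu
      · rw [Equiv.swap_apply_left]; simp
      · rw [Finset.mem_singleton] at hu; subst hu
        rw [Equiv.swap_apply_right]; simp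
    · intro u hu
      rcases Finset.mem_insert.1 hu with rfl | hu
      · rw [Equiv.swap_apply_left]; exact fun hc => hfy hc
      · rw [Finset.mem_singleton] at hu; subst hu
        rw [Equiv.swap_apply_right]; exact fun hc => hfy hc.symm
    · intro u hu hunv
      rcases Finset.mem_insert.1 hu with rfl | hu
      · rw [Equiv.swap_apply_left]
        exact hfp.2 u hfy
      · rw [Finset.mem_singleton] at hu; subst hu
        exact absurd rfl hunv
  | step hs hv1 hv2 hv3 hv4 ih =>
    rename_i v S
    obtain ⟨ρ, hρv, hρoff, hρmem, hρne, hρadj⟩ := ih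
    obtain ⟨iy, iv, ivy, ifc, ihc⟩ := hs.hinv hfp.1 hhp.1 hy
    have hyw : y ≠ h v := fun hc => hv2 (hc ▸ iy)
    have hyv' : y ≠ f (h v) := fun hc => hv4 (hc ▸ iy)
    have hwv' : h v ≠ f (h v) := fun hc => hv3 hc.symm
    have hvw : v ≠ h v := fun hc => hv2 (hc ▸ iv)
    have hvv' : v ≠ f (h v) := fun hc => hv4 (hc ▸ iv)
    have hρy : ∀ u, ρ u = y → u = v := by
      intro u hu
      have : ρ u = ρ v := by rw [hρv, hu]
      exact ρ.injective this
    refine ⟨(Equiv.swap y (f (h v))) * ((Equiv.swap y (h v)) * ρ), ?_, ?_, ?_, ?_, ?_⟩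
    · -- value at new endpoint f (h v)
      have h1 : ρ (f (h v)) = f (h v) := hρoff _ hv4
      simp only [Equiv.Perm.mul_apply, h1,
        Equiv.swap_apply_of_ne_of_ne (Ne.symm hyv') hwv'.symm, Equiv.swap_apply_right]
    · intro u hu
      simp only [Finset.mem_union, Finset.mem_insert, Finset.mem_singleton, not_or] at hu
      obtain ⟨huS, huw, huv'⟩ := hu
      have h1 : ρ u = u := hρoff u huS
      have h2 : u ≠ y := fun hc => huS (hc ▸ iy)
      simp only [Equiv.Perm.mul_apply, h1, Equiv.swap_apply_of_ne_of_ne h2 huw,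
        Equiv.swap_apply_of_ne_of_ne h2 huv']
    · intro u hu
      rcases Finset.mem_union.1 hu with huS | hunew
      · by_cases huv : u = v
        · subst huv
          simp only [Equiv.Perm.mul_apply, hρv, Equiv.swap_apply_left,
            Equiv.swap_apply_of_ne_of_ne (Ne.symm hyw) hwv']
          exact Finset.mem_union_right _ (by simp)
        · have h1 : ρ u ≠ y := fun hc => huv (hρy u hc)
          have h2 : ρ u ∈ S := hρmem u huS
          have h3 : ρ u ≠ h v := fun hc => hv2 (hc ▸ h2)
          have h4 : ρ u ≠ f (h v) := fun hc => hv4 (hc ▸ h2)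
          simp only [Equiv.Perm.mul_apply, Equiv.swap_apply_of_ne_of_ne h1 h3,
            Equiv.swap_apply_of_ne_of_ne h1 h4]
          exact Finset.mem_union_left _ h2
      · rcases Finset.mem_insert.1 hunew with rfl | hunew
        · have h1 : ρ (h v) = h v := hρoff _ hv2
          simp only [Equiv.Perm.mul_apply, h1, Equiv.swap_apply_right,
            Equiv.swap_apply_left]
          exact Finset.mem_union_right _ (by simp)
        · rw [Finset.mem_singleton] at hunew; subst hunew
          have h1 : ρ (f (h v)) = f (h v) := hρoff _ hv4
          simp only [Equiv.Perm.mul_apply, h1,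
            Equiv.swap_apply_of_ne_of_ne (Ne.symm hyv') hwv'.symm, Equiv.swap_apply_right]
          exact Finset.mem_union_left _ iy
    · intro u hu
      rcases Finset.mem_union.1 hu with huS | hunew
      · by_cases huv : u = v
        · subst huv
          simp only [Equiv.Perm.mul_apply, hρv, Equiv.swap_apply_left,
            Equiv.swap_apply_of_ne_of_ne (Ne.symm hyw) hwv']
          exact Ne.symm hvw
        · have h1 : ρ u ≠ y := fun hc => huv (hρy u hc)
          have h3 : ρ u ≠ h v := fun hc => hv2 (hc ▸ hρmem u huS)
          have h4 : ρ u ≠ f (h v) := fun hc => hv4 (hc ▸ hρmem u huS)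
          simp only [Equiv.Perm.mul_apply, Equiv.swap_apply_of_ne_of_ne h1 h3,
            Equiv.swap_apply_of_ne_of_ne h1 h4]
          exact hρne u huS
      · rcases Finset.mem_insert.1 hunew with rfl | hunew
        · have h1 : ρ (h v) = h v := hρoff _ hv2
          simp only [Equiv.Perm.mul_apply, h1, Equiv.swap_apply_right,
            Equiv.swap_apply_left]
          exact Ne.symm hwv'
        · rw [Finset.mem_singleton] at hunew; subst hunew
          have h1 : ρ (f (h v)) = f (h v) := hρoff _ hv4
          simp only [Equiv.Perm.mul_apply, h1,
            Equiv.swap_apply_of_ne_of_ne (Ne.symm hyv') hwv'.symm, Equiv.swap_apply_right]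
          exact hyv'
    · intro u hu hune
      rcases Finset.mem_union.1 hu with huS | hunew
      · by_cases huv : u = v
        · subst huv
          simp only [Equiv.Perm.mul_apply, hρv, Equiv.swap_apply_left,
            Equiv.swap_apply_of_ne_of_ne (Ne.symm hyw) hwv']
          exact hhp.2 u hv1
        · have h1 : ρ u ≠ y := fun hc => huv (hρy u hc)
          have h3 : ρ u ≠ h v := fun hc => hv2 (hc ▸ hρmem u huS)
          have h4 : ρ u ≠ f (h v) := fun hc => hv4 (hc ▸ hρmem u huS)
          simp only [Equiv.Perm.mul_apply, Equiv.swap_apply_of_ne_of_ne h1 h3,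
            Equiv.swap_apply_of_ne_of_ne h1 h4]
          exact hρadj u huS huv
      · rcases Finset.mem_insert.1 hunew with rfl | hunew
        · have h1 : ρ (h v) = h v := hρoff _ hv2
          simp only [Equiv.Perm.mul_apply, h1, Equiv.swap_apply_right,
            Equiv.swap_apply_left]
          exact hfp.2 _ hv3
        · rw [Finset.mem_singleton] at hunew; subst hunew
          exact absurd rfl hune

lemma sVal_ge_of_Dedge {x z : V} (hx : x ∈ DSet G) (hz : z ∈ DSet G) (hadj : G.Adj x z) :
    2 * matchingNumber G + 1 ≤ sVal G := by
  classical
  obtain ⟨f, hf, hfx⟩ := (mem_DSet_iff G x).1 hx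
  obtain ⟨h, hh, hhz⟩ := (mem_DSet_iff G z).1 hz
  have hxz : x ≠ z := hadj.ne
  have hfz : f z ≠ z := fun hc => no_two_exposed hf hfx hc hadj
  obtain ⟨v, S, hs, hwv, hw, hfw⟩ := hseq_reach hf.1 hh.1 hh.2 hhz hfz
  obtain ⟨iy, iv, ivy, ifc, ihc⟩ := hs.hinv hf.1.1 hh.1.1 hhz
  have hxS : x ∉ S := fun hc => (ifc x hc).2 hfx
  have hwx : h v = x := by
    by_contra hc
    obtain ⟨g, hgp, hgz, hoff, hgsupp⟩ := hseq_flip hf.1 hh.1 hhz hfz hs hwv hw hfw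
    have hgx : g x = x := by
      rw [hoff x hxS (fun he => hc he.symm)]
      exact hfx
    have hgcard : (psupp g).card = 2 * matchingNumber G := by
      rw [hgsupp, card_flip_psupp hfw hfz, hf.2]
    exact no_two_exposed ⟨hgp, hgcard⟩ hgx hgz hadj
  obtain ⟨ρ, hρv, hρoff, hρmem, hρne, hρadj⟩ := hseq_rho hf.1 hh.1 hhz hs
  set T := S ∪ {x} with hT
  have hxT : x ∈ T := Finset.mem_union_right _ (by simp)
  have hclosed : ∀ u, u ∉ T → f u ∉ T := by
    intro u hu hc
    rcases Finset.mem_union.1 hc with hcS | hcx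
    · have := (ifc (f u) hcS).1
      rw [hf.1.1 u] at this
      exact hu (Finset.mem_union_left _ this)
    · rw [Finset.mem_singleton] at hcx
      have : u = f x := by rw [← hcx, hf.1.1]
      rw [hfx] at this
      exact hu (Finset.mem_union_right _ (by simp [this]))
  set q : V → V := fun u => if u ∈ T then u else f u with hq
  have hqinv : Function.Involutive q := by
    intro u
    by_cases hu : u ∈ T
    · simp [hq, hu]
    · have h1 : f u ∉ T := hclosed u hu
      simp [hq, hu, h1, hf.1.1 u]
  set SG : Equiv.Perm V := (Equiv.swap z x) * ρ * (Function.Involutive.toPerm q hqinv)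
    with hSG
  have happ : ∀ u, SG u = Equiv.swap z x (ρ (q u)) := fun u => rfl
  have hρy : ∀ u, ρ u = z → u = v := by
    intro u hu
    exact ρ.injective (by rw [hρv, hu])
  -- compute values
  have hvalS : ∀ u ∈ S, u ≠ v → SG u = ρ u := by
    intro u huS huv
    have h1 : q u = u := by
      simp only [hq]
      rw [if_pos (Finset.mem_union_left _ huS)]
    have h2 : ρ u ≠ z := fun hc => huv (hρy u hc)
    have h3 : ρ u ≠ x := fun hc => hxS (hc ▸ hρmem u huS)
    rw [happ, h1, Equiv.swap_apply_of_ne_of_ne h2 h3]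
  have hvalv : SG v = x := by
    have h1 : q v = v := by
      simp only [hq]
      rw [if_pos (Finset.mem_union_left _ iv)]
    rw [happ, h1, hρv, Equiv.swap_apply_left]
  have hvalx : SG x = z := by
    have h1 : q x = x := by
      simp only [hq]
      rw [if_pos hxT]
    have h2 : ρ x = x := hρoff x hxS
    rw [happ, h1, h2, Equiv.swap_apply_right]
  have hvaloff : ∀ u, u ∉ T → SG u = f u := by
    intro u hu
    have h1 : q u = f u := by
      simp only [hq]
      rw [if_neg hu]
    have h2 : f u ∉ T := hclosed u hu
    have h3 : f u ∉ S := fun hc => h2 (Finset.mem_union_left _ hc)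
    have h4 : ρ (f u) = f u := hρoff _ h3
    have h5 : f u ≠ z := fun hc => h2 (hc ▸ Finset.mem_union_left _ iy)
    have h6 : f u ≠ x := fun hc => h2 (hc ▸ hxT)
    rw [happ, h1, h4, Equiv.swap_apply_of_ne_of_ne h5 h6]
  have hgood : GoodPerm G SG := by
    intro u hne
    by_cases huT : u ∈ T
    · rcases Finset.mem_union.1 huT with huS | hux
      · by_cases huv : u = v
        · subst huv
          rw [hvalv]
          have : G.Adj u (h u) := hh.1.2 u hwv
          rw [hwx] at this
          exact this.symm
        · rw [hvalS u huS huv]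
          exact (hρadj u huS huv).symm
      · rw [Finset.mem_singleton] at hux; subst hux
        rw [hvalx]
        exact hadj.symm
    · rw [hvaloff u huT] at hne ⊢
      exact (hf.1.2 u hne).symm
  have hsupp : SG.support = psupp f ∪ {x} := by
    ext u
    rw [Equiv.Perm.mem_support]
    simp only [Finset.mem_union, Finset.mem_singleton, mem_psupp]
    by_cases huT : u ∈ T
    · rcases Finset.mem_union.1 huT with huS | hux
      · by_cases huv : u = v
        · subst huv
          rw [hvalv]
          constructor
          · intro _; exact Or.inl (ifc u huS).2
          · intro _; exact fun hc => hxS (hc ▸ huS)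
        · rw [hvalS u huS huv]
          constructor
          · intro _; exact Or.inl (ifc u huS).2
          · intro _; exact hρne u huS
      · rw [Finset.mem_singleton] at hux; subst hux
        rw [hvalx]
        constructor
        · intro _; exact Or.inr rfl
        · intro _; exact Ne.symm hxz
    · rw [hvaloff u huT]
      have hux : u ≠ x := fun hc => huT (hc ▸ hxT)
      constructor
      · intro hne; exact Or.inl hne
      · rintro (hne | hne)
        · exact hne
        · exact absurd hne hux
  have hcard : SG.support.card = 2 * matchingNumber G + 1 := by
    rw [hsupp, Finset.card_union_of_disjoint (by simp [mem_psupp, hfx]),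
      Finset.card_singleton, hf.2]
  rw [← hcard]
  exact good_le_sVal G SG hgood

end Stmt8Aux

theorem stmt8 {V : Type*} [Fintype V] (G : SimpleGraph V) (hc : G.Connected) :
    perNullity G = Fintype.card V - 2 * matchingNumber G ↔
      ((∃ M : G.Subgraph, M.IsPerfectMatching) ∨
        ∀ x ∈ DSet G, ∀ y ∈ DSet G, ¬ G.Adj x y) := by
  classical
  have hper := Stmt8Aux.perNullity_eq G
  have h2s := Stmt8Aux.two_nu_le_sVal G
  have hsn := Stmt8Aux.sVal_le_card G
  constructor
  · intro hEq
    by_contra hcon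
    push_neg at hcon
    obtain ⟨hnPM, x, hxD, y, hyD, hadj⟩ := hcon
    have hge := Stmt8Aux.sVal_ge_of_Dedge (G := G) hxD hyD hadj
    rw [hper] at hEq
    omega
  · rintro (hPM | hind)
    · have h1 := (Stmt8Aux.PM_iff G).1 hPM
      rw [hper]
      omega
    · have hle := Stmt8Aux.sVal_le_of_indep (G := G) hind
      rw [hper]
      omega
end
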